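/- arXiv:2506.02687 — 6 statements merged into one kernel-verified Lean document; each statement's English description precedes it below -/
import Mathlib

section
/- Let G be a 2-connected finite simple graph on n ≥ 3 vertices. If max{d_G(x), d_G(y)} ≥ n/2 for every pair of vertices x, y with d_G(x, y) = 2, then G is hamiltonian. -/
open SimpleGraph

/-- The bipartite independence number of a finite simple graph `G`: the smallest `q : ℕ` for
which there exist positive integers `s` and `t` with `s + t = q + 1` such that for any two
disjoint vertex subsets `A`, `B` with `|A| = s` and `|B| = t` there is an edge between them. -/
noncomputable def bipIndepNum {V : Type*} [Fintype V] (G : SimpleGraph V) : ℕ :=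
  sInf {q : ℕ | ∃ s t : ℕ, 0 < s ∧ 0 < t ∧ s + t = q + 1 ∧
    ∀ A B : Finset V, Disjoint A B → A.card = s → B.card = t →
      ∃ a ∈ A, ∃ b ∈ B, G.Adj a b}

/-- A graph is `k`-connected if it has more than `k` vertices and deleting any set of fewer
than `k` vertices leaves a connected graph. -/
def KConnected {V : Type*} [Fintype V] [DecidableEq V] (k : ℕ) (G : SimpleGraph V) : Prop :=
  k < Fintype.card V ∧
    ∀ S : Finset V, S.card < k → (G.induce ((↑S : Set V)ᶜ)).Connected

/-- A graph is hamiltonian-connected if between any two distinct vertices there is a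
Hamilton path. -/
def HamiltonianConnected {V : Type*} [DecidableEq V] (G : SimpleGraph V) : Prop :=
  ∀ u v : V, u ≠ v → ∃ p : G.Walk u v, p.IsHamiltonian

/-- The join of two graphs. -/
def graphJoin {α β : Type*} (G : SimpleGraph α) (H : SimpleGraph β) :
    SimpleGraph (α ⊕ β) where
  Adj x y :=
    match x, y with
    | Sum.inl a, Sum.inl b => G.Adj a b
    | Sum.inr a, Sum.inr b => H.Adj a b
    | Sum.inl _, Sum.inr _ => True
    | Sum.inr _, Sum.inl _ => True
  symm := ⟨by rintro (a | a) (b | b) h <;> simp_all <;> exact h.symm⟩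
  loopless := ⟨by rintro (a | a) h <;> simp_all⟩

instance {α β : Type*} (G : SimpleGraph α) (H : SimpleGraph β)
    [DecidableRel G.Adj] [DecidableRel H.Adj] : DecidableRel (graphJoin G H).Adj
  | Sum.inl a, Sum.inl b => inferInstanceAs (Decidable (G.Adj a b))
  | Sum.inl _, Sum.inr _ => inferInstanceAs (Decidable True)
  | Sum.inr _, Sum.inl _ => inferInstanceAs (Decidable True)
  | Sum.inr a, Sum.inr b => inferInstanceAs (Decidable (H.Adj a b))

section FanHelpers


variable {V : Type*} {G : SimpleGraph V}

/-- Walk from a chain list. -/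
def fanListWalk (G : SimpleGraph V) : (l : List V) → l.Chain' G.Adj → (h : l ≠ []) →
    G.Walk (l.head h) (l.getLast h)
  | [_], _, _ => Walk.nil
  | _ :: b :: t, hc, _ =>
      Walk.cons (List.isChain_cons_cons.mp hc).1
        ((fanListWalk G (b :: t) (show (b :: t).Chain' G.Adj from (List.isChain_cons_cons.mp hc).2) (by simp)).copy rfl
          (List.getLast_cons (by simp)).symm)

lemma fanListWalk_support (G : SimpleGraph V) : ∀ (l : List V) (hc : l.Chain' G.Adj) (h : l ≠ []),
    (fanListWalk G l hc h).support = l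
  | [_], _, _ => rfl
  | a :: b :: t, hc, h => by
      rw [fanListWalk]
      simp only [Walk.support_cons, Walk.support_copy, List.head_cons]
      erw [fanListWalk_support G (b :: t)]

lemma fanListWalk_edges (G : SimpleGraph V) : ∀ (l : List V) (hc : l.Chain' G.Adj) (h : l ≠ []),
    (fanListWalk G l hc h).edges = (l.zip l.tail).map (fun p => s(p.1, p.2))
  | [_], _, _ => rfl
  | a :: b :: t, hc, h => by
      rw [fanListWalk]
      simp only [Walk.edges_cons, Walk.edges_copy, List.head_cons]
      erw [fanListWalk_edges G (b :: t)]
      simp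

lemma fan_ham_of_list [Fintype V] [DecidableEq V] (C : List V) (hnd : C.Nodup)
    (hc : C.Chain' G.Adj) (hlen : C.length = Fintype.card V) (h3 : 3 ≤ C.length)
    (hne : C ≠ []) (hcl : G.Adj (C.getLast hne) (C.head hne)) :
    ∃ a, ∃ w : G.Walk a a, w.IsHamiltonianCycle := by
  refine ⟨C.getLast hne, Walk.cons hcl (fanListWalk G C hc hne), ?_⟩
  rw [Walk.isHamiltonianCycle_iff_isCycle_and_support_count_tail_eq_one]
  constructor
  · rw [Walk.cons_isCycle_iff]
    refine ⟨Walk.IsPath.mk' (by rw [fanListWalk_support]; exact hnd), ?_⟩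
    rw [fanListWalk_edges]
    intro hmem
    obtain ⟨⟨x, y⟩, hxy, heq⟩ := List.mem_map.mp hmem
    obtain ⟨i, hi, hget⟩ := List.mem_iff_getElem.mp hxy
    rw [List.getElem_zip] at hget
    have hil : i < C.length := lt_of_lt_of_le hi (by simpa using List.length_zip_le_left C C.tail)
    have hi1 : i + 1 < C.length := by
      have : (C.zip C.tail).length = C.length - 1 := by
        simp [List.length_zip]
      omega
    have hx : x = C[i] := by
      have := congrArg Prod.fst hget; simpa using this.symm
    have hy : y = C[i + 1] := by
      have := congrArg Prod.snd hget
      simp only at this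
      rw [← this, List.getElem_tail]
    have hCne : 0 < C.length := by omega
    have hinj : ∀ a b : ℕ, (ha : a < C.length) → (hb : b < C.length) → C[a] = C[b] → a = b := by
      intro a b ha hb hab
      exact (List.Nodup.getElem_inj_iff hnd).mp hab
    rw [hx, hy] at heq
    simp only [Sym2.eq, Sym2.rel_iff', Prod.mk.injEq, Prod.swap_prod_mk] at heq
    rw [List.getLast_eq_getElem, List.head_eq_getElem] at heq
    rcases heq with ⟨h1, h2⟩ | ⟨h1, h2⟩
    · have := hinj _ _ hi1 hCne h2
      omega
    · have hi0 := hinj _ _ hil hCne h1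
      subst hi0
      have := hinj _ _ hi1 (by omega) h2
      omega
  · intro a
    have hsupp : (Walk.cons hcl (fanListWalk G C hc hne)).support.tail = C := by
      simp [Walk.support_cons, fanListWalk_support]
    rw [hsupp]
    apply List.count_eq_one_of_mem hnd
    have : C.toFinset = Finset.univ := by
      apply Finset.eq_univ_of_card
      rw [List.toFinset_card_of_nodup hnd, hlen]
    have := Finset.eq_univ_iff_forall.mp this a
    simpa using this

lemma fan_walk_cross {A : Set V} : ∀ {a b : V}, G.Walk a b → a ∈ A → b ∉ A →
    ∃ x ∈ A, ∃ y, y ∉ A ∧ G.Adj x y := by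
  intro a b w
  induction w with
  | nil => intro h h'; exact absurd h h'
  | @cons u v w h p ih =>
    intro ha hb
    by_cases hv : v ∈ A
    · exact ih hv hb
    · exact ⟨u, ha, v, hv, h⟩

lemma fan_conn_cross (hcon : G.Connected) {A : Set V} {x y : V} (hx : x ∈ A) (hy : y ∉ A) :
    ∃ a ∈ A, ∃ b, b ∉ A ∧ G.Adj a b :=
  (hcon.preconnected x y).elim fun w => fan_walk_cross w hx hy

lemma fan_cut_cross {c : V} (hcon : (G.induce ({c} : Set V)ᶜ).Connected) {A : Set V} {x y : V}
    (hx : x ∈ A) (hxc : x ≠ c) (hy : y ∉ A) (hyc : y ≠ c) :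
    ∃ a ∈ A, ∃ b, b ∉ A ∧ b ≠ c ∧ a ≠ c ∧ G.Adj a b := by
  set s : Set V := ({c} : Set V)ᶜ with hs
  have hxs : x ∈ s := by simp [hs, hxc]
  have hys : y ∈ s := by simp [hs, hyc]
  set A' : Set s := {v : s | (v : V) ∈ A} with hA'
  have hx' : (⟨x, hxs⟩ : s) ∈ A' := hx
  have hy' : (⟨y, hys⟩ : s) ∉ A' := hy
  obtain ⟨a, ha, b, hb, hab⟩ := fan_conn_cross hcon hx' hy'
  refine ⟨(a : V), ha, (b : V), hb, ?_, ?_, ?_⟩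
  · have hb2 := b.2
    simp only [hs, Set.mem_compl_iff, Set.mem_singleton_iff] at hb2
    exact hb2
  · have ha2 := a.2
    simp only [hs, Set.mem_compl_iff, Set.mem_singleton_iff] at ha2
    exact ha2
  · simpa using hab

lemma fan_dist_two {x y c : V} (hxy : x ≠ y) (hnadj : ¬ G.Adj x y)
    (h1 : G.Adj x c) (h2 : G.Adj c y) : G.dist x y = 2 := by
  have hw : G.dist x y ≤ 2 := by
    have := SimpleGraph.dist_le (Walk.cons h1 (Walk.cons h2 Walk.nil))
    simpa using this
  have h0 : G.dist x y ≠ 0 := by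
    rw [Ne, SimpleGraph.dist_eq_zero_iff_eq_or_not_reachable]
    push_neg
    exact ⟨hxy, (Walk.cons h1 (Walk.cons h2 Walk.nil)).reachable⟩
  have hone : G.dist x y ≠ 1 := by
    rw [Ne, SimpleGraph.dist_eq_one_iff_adj]; exact hnadj
  omega

lemma fan_chain_append {l1 l2 : List V} (h1 : l1.Chain' G.Adj) (h2 : l2.Chain' G.Adj)
    (hne1 : l1 ≠ []) (hne2 : l2 ≠ [])
    (hj : G.Adj (l1.getLast hne1) (l2.head hne2)) : (l1 ++ l2).Chain' G.Adj := by
  unfold List.Chain'; rw [List.isChain_append]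
  refine ⟨h1, h2, ?_⟩
  intro x hx y hy
  rw [List.getLast?_eq_getLast hne1] at hx
  rw [List.head?_eq_head hne2] at hy
  simp only [Option.mem_some_iff] at hx hy
  rw [← hx, ← hy]
  exact hj

lemma fan_chain_reverse {l : List V} (h : l.Chain' G.Adj) : l.reverse.Chain' G.Adj := by
  unfold List.Chain'; rw [List.isChain_reverse]
  exact h.imp fun a b hab => hab.symm

lemma fan_chain_getElem {l : List V} (h : l.Chain' G.Adj) {i : ℕ} (hi : i + 1 < l.length) :
    G.Adj (l[i]'(by omega)) (l[i+1]'hi) := by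
  have := List.isChain_iff_getElem.mp h i (by omega)
  simpa [List.get_eq_getElem] using this

/-- Rotation of a path at an endpoint-chord. -/
lemma fan_rot (R : List V) (hc : R.Chain' G.Adj) (j : ℕ) (hj1 : 1 ≤ j)
    (hj : j + 1 < R.length) (hne : R ≠ [])
    (hadj : G.Adj (R.head hne) (R[j+1]'hj)) :
    ∃ (R' : List V) (hne' : R' ≠ []), R'.Perm R ∧ R'.Chain' G.Adj ∧
      R'.head hne' = R[j]'(by omega) ∧ R'.getLast hne' = R.getLast hne := by
  have hlen : 0 < R.length := by omega
  have hne1 : (R.take (j+1)).reverse ≠ [] := by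
    rw [ne_eq, List.reverse_eq_nil_iff, List.take_eq_nil_iff]
    push_neg
    exact ⟨by omega, hne⟩
  have hne2 : R.drop (j+1) ≠ [] := by
    rw [ne_eq, List.drop_eq_nil_iff]
    omega
  have hperm : ((R.take (j+1)).reverse ++ R.drop (j+1)).Perm R := by
    have p1 := List.Perm.append_right (R.drop (j+1)) (R.take (j+1)).reverse_perm
    rw [R.take_append_drop (j+1)] at p1
    exact p1
  refine ⟨(R.take (j+1)).reverse ++ R.drop (j+1), by simp [hne1], hperm, ?_, ?_, ?_⟩
  · apply fan_chain_append (fan_chain_reverse (hc.take _)) (hc.drop _) hne1 hne2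
    have e1 : ((R.take (j+1)).reverse).getLast hne1 = R.head hne := by
      rw [List.getLast_reverse, List.head_take]
    have e2 : (R.drop (j+1)).head hne2 = R[j+1]'hj := by
      rw [List.head_drop]
    rw [e1, e2]
    exact hadj
  · rw [List.head_append _, dif_neg (by simp [hne1, hne])]
    rw [List.head_reverse, List.getLast_eq_getElem, List.getElem_take]
    congr 1
    rw [List.length_take]
    omega
  · rw [List.getLast_append _, dif_neg (by simp [hne2])]
    rw [List.getLast_drop]

lemma fan_deg_count [Fintype V] [DecidableEq V] [DecidableRel G.Adj]
    (R : List V) (hnd : R.Nodup) (d0 : V) (x : V)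
    (hx : ∀ z, G.Adj x z → z ∈ R) :
    ((Finset.range R.length).filter (fun t => G.Adj x (R.getD t d0))).card = G.degree x := by
  rw [← SimpleGraph.card_neighborFinset_eq_degree]
  apply Finset.card_bij (fun t _ => R.getD t d0)
  · intro t ht
    simp only [Finset.mem_filter, Finset.mem_range] at ht
    rw [SimpleGraph.mem_neighborFinset]
    exact ht.2
  · intro s hs t ht hst
    simp only [Finset.mem_filter, Finset.mem_range] at hs ht
    rw [List.getD_eq_getElem R d0 hs.1, List.getD_eq_getElem R d0 ht.1] at hst
    exact (List.Nodup.getElem_inj_iff hnd).mp hst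
  · intro z hz
    rw [SimpleGraph.mem_neighborFinset] at hz
    obtain ⟨t, ht, heq⟩ := List.mem_iff_getElem.mp (hx z hz)
    refine ⟨t, ?_, ?_⟩
    · simp only [Finset.mem_filter, Finset.mem_range]
      refine ⟨ht, ?_⟩
      rw [List.getD_eq_getElem R d0 ht, heq]
      exact hz
    · rw [List.getD_eq_getElem R d0 ht, heq]

lemma fan_interval (T : Finset ℕ) (p : ℕ) (hsub : T ⊆ Finset.Ico 1 p)
    (hcl : ∀ t ∈ T, ∀ s, 1 ≤ s → s ≤ t → s ∈ T) :
    ∀ t, t ∈ T ↔ (1 ≤ t ∧ t ≤ T.card) := by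
  intro t
  constructor
  · intro ht
    have h1 : 1 ≤ t := (Finset.mem_Ico.mp (hsub ht)).1
    refine ⟨h1, ?_⟩
    have hsub2 : Finset.Icc 1 t ⊆ T := by
      intro s hs
      rw [Finset.mem_Icc] at hs
      exact hcl t ht s hs.1 hs.2
    have := Finset.card_le_card hsub2
    rwa [Nat.card_Icc, Nat.add_sub_cancel] at this
  · rintro ⟨h1, h2⟩
    by_contra hnt
    have hsub2 : T ⊆ Finset.Ico 1 t := by
      intro s hs
      rw [Finset.mem_Ico]
      refine ⟨(Finset.mem_Ico.mp (hsub hs)).1, ?_⟩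
      by_contra hst
      exact hnt (hcl s hs t h1 (by omega))
    have := Finset.card_le_card hsub2
    rw [Nat.card_Ico] at this
    omega

/-- Crossing chords give a cycle list on the same vertex set. -/
lemma fan_cross_list (R : List V) (hne : R ≠ []) (hnd : R.Nodup) (hc : R.Chain' G.Adj)
    (t : ℕ) (h1 : 1 ≤ t) (h2 : t < R.length)
    (hadj1 : G.Adj (R.head hne) (R[t]'h2))
    (hadj2 : G.Adj (R[t-1]'(by omega)) (R.getLast hne)) :
    ∃ (C : List V) (hC : C ≠ []), C.Nodup ∧ C.Chain' G.Adj ∧ C.length = R.length ∧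
      G.Adj (C.getLast hC) (C.head hC) := by
  have hne1 : R.take t ≠ [] := by
    rw [ne_eq, List.take_eq_nil_iff]; push_neg; exact ⟨by omega, hne⟩
  have hne2 : (R.drop t).reverse ≠ [] := by
    rw [ne_eq, List.reverse_eq_nil_iff, List.drop_eq_nil_iff]; omega
  have hperm : (R.take t ++ (R.drop t).reverse).Perm R := by
    have p1 := List.Perm.append_left (R.take t) (R.drop t).reverse_perm
    have := p1.trans (List.Perm.of_eq (R.take_append_drop t))
    exact this
  refine ⟨R.take t ++ (R.drop t).reverse, by simp [hne1], hperm.symm.nodup hnd, ?_,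
    by rw [hperm.length_eq], ?_⟩
  · apply fan_chain_append (hc.take _) (fan_chain_reverse (hc.drop _)) hne1 hne2
    have e1 : (R.take t).getLast hne1 = R[t-1]'(by omega) := by
      rw [List.getLast_eq_getElem, List.getElem_take]
      congr 1
      rw [List.length_take]
      omega
    have e2 : ((R.drop t).reverse).head hne2 = R.getLast hne := by
      rw [List.head_reverse, List.getLast_drop]
    rw [e1, e2]
    exact hadj2
  · rw [List.getLast_append _, dif_neg (by simp [hne2, h2]), List.head_append _,
      dif_neg (by simp [hne1])]
    rw [List.getLast_reverse, List.head_drop, List.head_take]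
    exact hadj1.symm

lemma fan_block [Fintype V] [DecidableEq V] [DecidableRel G.Adj]
    (d0 : V) (p M dv1 : ℕ) (w : V)
    (hdeg : ∀ x y : V, G.dist x y = 2 →
      (Fintype.card V : ℝ) / 2 ≤ ((max (G.degree x) (G.degree y) : ℕ) : ℝ))
    (hmax : ∀ l : List V, l ≠ [] → l.Nodup → l.Chain' G.Adj → l.length ≤ p)
    (hMmax : ∀ (l : List V) (hne : l ≠ []), l.Nodup → l.Chain' G.Adj → l.length = p →
      l.getLast hne = w → G.degree (l.head hne) + G.degree w ≤ M)
    (hM : M = dv1 + G.degree w)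
    (hsmall : (dv1 : ℝ) < (Fintype.card V : ℝ) / 2)
    (R : List V) (hne : R ≠ []) (hnd : R.Nodup) (hc : R.Chain' G.Adj)
    (hlen : R.length = p) (hlast : R.getLast hne = w) :
    ∀ t, 1 ≤ t → t < p → (G.Adj (R.head hne) (R.getD t d0) ↔ t ≤ G.degree (R.head hne)) := by
  have hp0 : 0 < p := by rw [← hlen]; exact List.length_pos_iff.mpr hne
  have hr0deg : G.degree (R.head hne) ≤ dv1 := by
    have := hMmax R hne hnd hc hlen hlast
    omega
  have hr0small : (G.degree (R.head hne) : ℝ) < (Fintype.card V : ℝ) / 2 :=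
    lt_of_le_of_lt (by exact_mod_cast hr0deg) hsmall
  have hhead : R.head hne = R[0]'(by omega) := List.head_eq_getElem hne
  -- all neighbours of the head lie on R
  have hnbr : ∀ z, G.Adj (R.head hne) z → z ∈ R := by
    intro z hz
    by_contra hzR
    have hnd' : (z :: R).Nodup := List.nodup_cons.mpr ⟨hzR, hnd⟩
    have hc' : (z :: R).Chain' G.Adj := by
      unfold List.Chain'; rw [List.isChain_cons]
      refine ⟨?_, hc⟩
      intro y hy
      rw [List.head?_eq_head hne, Option.mem_some_iff] at hy
      rw [← hy]
      exact hz.symm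
    have := hmax (z :: R) (by simp) hnd' hc'
    simp only [List.length_cons, hlen] at this
    omega
  -- downward closure of the neighbourhood indices
  have hclo : ∀ j, 1 ≤ j → j + 1 < p → G.Adj (R.head hne) (R.getD (j+1) d0) →
      G.Adj (R.head hne) (R.getD j d0) := by
    intro j hj1 hj2 hadj
    by_contra hno
    have hj2' : j + 1 < R.length := by omega
    rw [List.getD_eq_getElem R d0 hj2'] at hadj
    rw [List.getD_eq_getElem R d0 (by omega : j < R.length)] at hno
    obtain ⟨R', hne', hperm, hc', hhead', hlast'⟩ := fan_rot R hc j hj1 hj2' hne hadj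
    have hne0j : R.head hne ≠ R[j]'(by omega) := by
      rw [hhead]
      intro h
      have := (List.Nodup.getElem_inj_iff hnd).mp h
      omega
    have hdist : G.dist (R.head hne) (R[j]'(by omega)) = 2 :=
      fan_dist_two hne0j hno hadj (fan_chain_getElem hc hj2').symm
    have hmaxdeg := hdeg _ _ hdist
    have hMj := hMmax R' hne' (hperm.symm.nodup hnd) hc' (by rw [hperm.length_eq, hlen])
      (by rw [hlast', hlast])
    rw [hhead', hM] at hMj
    have hjdeg : G.degree (R[j]'(by omega)) ≤ dv1 := by omega
    have : ((max (G.degree (R.head hne)) (G.degree (R[j]'(by omega))) : ℕ) : ℝ) <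
        (Fintype.card V : ℝ) / 2 := by
      push_cast
      apply max_lt hr0small
      exact lt_of_le_of_lt (by exact_mod_cast hjdeg) hsmall
    linarith
  -- the index set of neighbours
  set T : Finset ℕ := (Finset.range p).filter (fun t => G.Adj (R.head hne) (R.getD t d0))
    with hT
  have hTcard : T.card = G.degree (R.head hne) := by
    rw [hT, ← hlen]
    exact fan_deg_count R hnd d0 (R.head hne) hnbr
  have hT0 : ∀ t ∈ T, 1 ≤ t := by
    intro t ht
    rcases Nat.eq_zero_or_pos t with h0 | h1
    · exfalso
      rw [hT, Finset.mem_filter] at ht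
      rw [h0, List.getD_eq_getElem R d0 (by omega), ← hhead] at ht
      exact G.irrefl ht.2
    · exact h1
  have hsub : T ⊆ Finset.Ico 1 p := by
    intro t ht
    rw [Finset.mem_Ico]
    have := hT0 t ht
    rw [hT, Finset.mem_filter, Finset.mem_range] at ht
    exact ⟨this, ht.1⟩
  have hcl : ∀ t ∈ T, ∀ s, 1 ≤ s → s ≤ t → s ∈ T := by
    intro t ht s hs1 hs2
    induction t with
    | zero => omega
    | succ k ih =>
      rcases eq_or_lt_of_le hs2 with heq | hlt
      · rwa [heq]
      · have hk1 : 1 ≤ k := by omega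
        have hkmem : k ∈ T := by
          rw [hT, Finset.mem_filter, Finset.mem_range]
          have hkp : k + 1 < p := (Finset.mem_Ico.mp (hsub ht)).2
          refine ⟨by omega, hclo k hk1 hkp ?_⟩
          rw [hT, Finset.mem_filter] at ht
          exact ht.2
        exact ih hkmem (by omega)
  have hiff := fan_interval T p hsub hcl
  intro t h1 h2
  constructor
  · intro hadj
    have : t ∈ T := by
      rw [hT, Finset.mem_filter, Finset.mem_range]
      exact ⟨h2, hadj⟩
    have := (hiff t).mp this
    omega
  · intro hle
    have : t ∈ T := (hiff t).mpr ⟨h1, by omega⟩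
    rw [hT, Finset.mem_filter] at this
    exact this.2

section MainProof
variable {V : Type*} {G : SimpleGraph V}

theorem stmt_0' {V : Type*} [Fintype V] [DecidableEq V] (G : SimpleGraph V) [DecidableRel G.Adj]
    (hcard : 3 ≤ Fintype.card V)
    (hconn2 : 2 < Fintype.card V ∧
      ∀ S : Finset V, S.card < 2 → (G.induce ((↑S : Set V)ᶜ)).Connected)
    (hdeg : ∀ x y : V, G.dist x y = 2 →
      (Fintype.card V : ℝ) / 2 ≤ ((max (G.degree x) (G.degree y) : ℕ) : ℝ)) :
    G.IsHamiltonian := by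
  intro hn1
  by_contra hno
  have hcpos : 0 < Fintype.card V := lt_of_lt_of_le (by norm_num) hcard
  have hnonempty : Nonempty V := Fintype.card_pos_iff.mp hcpos
  obtain ⟨d0⟩ := hnonempty
  have hGconn : G.Connected := by
    have h := hconn2.2 ∅ (by simp)
    rw [Finset.coe_empty, Set.compl_empty] at h
    exact (induceUnivIso G).connected_iff.mp h
  -- there is an edge
  have hedge : ∃ x y : V, G.Adj x y := by
    obtain ⟨x, y, hxy⟩ := Fintype.exists_pair_of_one_lt_card (α := V) (by omega)
    obtain ⟨w⟩ := hGconn.preconnected x y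
    cases w with
    | nil => exact absurd rfl hxy
    | cons h _ => exact ⟨_, _, h⟩
  obtain ⟨x0, y0, hxy0⟩ := hedge
  -- the maximal path length p
  set Lset : Set ℕ := {k | ∃ l : List V, l ≠ [] ∧ l.Nodup ∧ l.Chain' G.Adj ∧ l.length = k}
    with hLset
  have hLbdd : BddAbove Lset := by
    refine ⟨Fintype.card V, ?_⟩
    rintro k ⟨l, _, hnd, _, rfl⟩
    exact hnd.length_le_card
  have hL2 : (2 : ℕ) ∈ Lset := by
    refine ⟨[x0, y0], by simp, by simp [hxy0.ne], ?_, by simp⟩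
    simp [List.Chain', List.isChain_cons_cons, hxy0]
  set p : ℕ := sSup Lset with hp
  have hpmemL : p ∈ Lset := Nat.sSup_mem ⟨2, hL2⟩ hLbdd
  have hp_max : ∀ l : List V, l ≠ [] → l.Nodup → l.Chain' G.Adj → l.length ≤ p := by
    intro l h1 h2 h3
    exact le_csSup hLbdd ⟨l, h1, h2, h3, rfl⟩
  have hp2 : 2 ≤ p := le_csSup hLbdd hL2
  have hpn : p ≤ Fintype.card V := by
    obtain ⟨l, _, hnd, _, hlp⟩ := hpmemL
    rw [← hlp]
    exact hnd.length_le_card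
  -- the maximal degree sum M over longest paths
  set Mset : Set ℕ := {m | ∃ (l : List V) (hne : l ≠ []), l.Nodup ∧ l.Chain' G.Adj ∧
      l.length = p ∧ m = G.degree (l.head hne) + G.degree (l.getLast hne)} with hMset
  have hMbdd : BddAbove Mset := by
    refine ⟨2 * Fintype.card V, ?_⟩
    rintro m ⟨l, hne, hnd, hc, hlen, rfl⟩
    have h1 := G.degree_lt_card_verts (l.head hne)
    have h2 := G.degree_lt_card_verts (l.getLast hne)
    omega
  have hMne : Mset.Nonempty := by
    obtain ⟨l, h1, h2, h3, h4⟩ := hpmemL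
    exact ⟨_, l, h1, h2, h3, h4, rfl⟩
  set M : ℕ := sSup Mset with hM
  obtain ⟨P, hPne, hPnd, hPc, hPlen, hPM⟩ := Nat.sSup_mem hMne hMbdd
  have hM_max : ∀ (l : List V) (hne : l ≠ []), l.Nodup → l.Chain' G.Adj → l.length = p →
      G.degree (l.head hne) + G.degree (l.getLast hne) ≤ M := by
    intro l h1 h2 h3 h4
    exact le_csSup hMbdd ⟨l, h1, h2, h3, h4, rfl⟩
  -- Claim A : there is no "cycle list" with p vertices
  have claimA : ∀ (C : List V) (hC : C ≠ []), C.Nodup → C.Chain' G.Adj → C.length = p →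
      G.Adj (C.getLast hC) (C.head hC) → False := by
    intro C hC hnd hc hlen hcl
    rcases eq_or_lt_of_le (hnd.length_le_card) with heq | hlt
    · exact hno (fan_ham_of_list C hnd hc heq (by omega) hC hcl)
    · -- extend to a longer path using connectivity
      have hz : ∃ z : V, z ∉ C := by
        by_contra hall
        push_neg at hall
        have : Finset.univ ⊆ C.toFinset := fun z _ => List.mem_toFinset.mpr (hall z)
        have := Finset.card_le_card this
        rw [List.toFinset_card_of_nodup hnd] at this
        simp at this
        omega
      obtain ⟨z, hz⟩ := hz
      obtain ⟨a, ha, b, hb, hab⟩ := fan_conn_cross hGconn (A := {x | x ∈ C})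
        (C.head_mem hC) hz
      simp only [Set.mem_setOf_eq] at ha hb
      obtain ⟨k, hk, hka⟩ := List.mem_iff_getElem.mp ha
      have hne1 : C.take (k+1) ≠ [] := by
        rw [ne_eq, List.take_eq_nil_iff]; push_neg; exact ⟨by omega, hC⟩
      have hL2c : (C.take (k+1) ++ [b]).Chain' G.Adj := by
        apply fan_chain_append (hc.take _) (List.isChain_singleton b) hne1 (by simp)
        rw [List.head_cons]
        have egl : (C.take (k+1)).getLast hne1 = a := by
          rw [List.getLast_eq_getElem, List.getElem_take, ← hka]
          congr 1
          rw [List.length_take]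
          omega
        rw [egl]
        exact hab
      have hLperm : (C.drop (k+1) ++ (C.take (k+1) ++ [b])).Perm (C ++ [b]) := by
        have e1 : C.drop (k+1) ++ (C.take (k+1) ++ [b]) =
            (C.drop (k+1) ++ C.take (k+1)) ++ [b] := by rw [List.append_assoc]
        rw [e1]
        apply List.Perm.append_right
        exact (List.perm_append_comm).trans (List.Perm.of_eq (C.take_append_drop (k+1)))
      have hLnd : (C.drop (k+1) ++ (C.take (k+1) ++ [b])).Nodup := by
        apply hLperm.symm.nodup
        rw [List.nodup_append]
        refine ⟨hnd, by simp, ?_⟩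
        intro x hx
        simp only [List.mem_singleton]
        rintro _ rfl hxb
        exact hb (hxb ▸ hx)
      have hLc : (C.drop (k+1) ++ (C.take (k+1) ++ [b])).Chain' G.Adj := by
        rcases eq_or_ne (C.drop (k+1)) [] with hde | hdne
        · rw [hde, List.nil_append]; exact hL2c
        · apply fan_chain_append (hc.drop _) hL2c hdne (by simp [hne1])
          rw [List.getLast_drop, List.head_append _, dif_neg (by simp [hne1]),
            List.head_take]
          exact hcl
      have := hp_max _ (by simp [hne1]) hLnd hLc
      rw [hLperm.length_eq] at this
      simp only [List.length_append, List.length_singleton, hlen] at this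
      omega
  -- no neighbours off a longest path
  have hnbr : ∀ (l : List V) (hne : l ≠ []), l.Nodup → l.Chain' G.Adj → l.length = p →
      ∀ z, G.Adj (l.head hne) z → z ∈ l := by
    intro l hne hnd hc hlen z hz
    by_contra hzR
    have := hp_max (z :: l) (by simp) (List.nodup_cons.mpr ⟨hzR, hnd⟩) ?_
    · simp only [List.length_cons, hlen] at this; omega
    · unfold List.Chain'; rw [List.isChain_cons]
      refine ⟨?_, hc⟩
      intro y hy
      rw [List.head?_eq_head hne, Option.mem_some_iff] at hy
      rw [← hy]; exact hz.symm
  -- key contradiction: the head of a sum-maximal longest path cannot have small degree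
  have key : ∀ (P' : List V) (hne' : P' ≠ []), P'.Nodup → P'.Chain' G.Adj → P'.length = p →
      G.degree (P'.head hne') + G.degree (P'.getLast hne') = M →
      ((G.degree (P'.head hne') : ℝ) < (Fintype.card V : ℝ) / 2) → False := by
    intro P' hne' hnd' hc' hlen' hsumM hsmall
    have hlenpos : 0 < P'.length := List.length_pos_iff.mpr hne'
    have hgd : ∀ (l : List V) (t : ℕ) (h : t < l.length), l.getD t d0 = l[t]'h := fun l t h =>
      List.getD_eq_getElem l d0 h
    have hMmaxw : ∀ (l : List V) (hne : l ≠ []), l.Nodup → l.Chain' G.Adj → l.length = p →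
        l.getLast hne = P'.getLast hne' →
        G.degree (l.head hne) + G.degree (P'.getLast hne') ≤ M := by
      intro l h1 h2 h3 h4 h5
      have := hM_max l h1 h2 h3 h4
      rwa [h5] at this
    have blk := fan_block (G := G) d0 p M (G.degree (P'.head hne')) (P'.getLast hne')
      hdeg hp_max hMmaxw hsumM.symm hsmall
    have hblkP := blk P' hne' hnd' hc' hlen' rfl
    set a : ℕ := G.degree (P'.head hne') with ha
    -- `1 ≤ a`
    have hhead0 : P'.head hne' = P'[0]'hlenpos := List.head_eq_getElem hne'
    have ha1 : 1 ≤ a := by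
      have h1l : 1 < P'.length := by omega
      have hadj01 : G.Adj (P'.head hne') (P'.getD 1 d0) := by
        rw [hgd P' 1 h1l, hhead0]
        exact fan_chain_getElem hc' h1l
      exact (hblkP 1 (le_refl 1) (by omega)).mp hadj01
    -- `a ≤ p - 2`
    have hlastel : P'.getLast hne' = P'[p-1]'(by omega) :=
      (List.getLast_eq_getElem hne').trans (by congr 1; rw [hlen'])
    have hap2 : a ≤ p - 2 := by
      by_contra hbig
      have hadj : G.Adj (P'.head hne') (P'.getD (p-1) d0) :=
        (hblkP (p-1) (by omega) (by omega)).mpr (by omega)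
      rw [hgd P' (p-1) (by omega), ← hlastel] at hadj
      exact claimA P' hne' hnd' hc' hlen' hadj.symm
    -- the cut vertex `c`
    have hmemc : a < P'.length := by omega
    set c : V := P'[a]'hmemc with hcdef
    have hcut : (G.induce (({c} : Set V))ᶜ).Connected := by
      have h := hconn2.2 {c} (by simp)
      rwa [Finset.coe_singleton] at h
    set A : Set V := {x | ∃ (t : ℕ) (h : t < P'.length), t < a ∧ P'[t]'h = x} with hA
    have hxA : P'.head hne' ∈ A := ⟨0, hlenpos, by omega, hhead0.symm⟩
    have hinj : ∀ (s t : ℕ) (hs : s < P'.length) (ht : t < P'.length),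
        P'[s]'hs = P'[t]'ht → s = t := by
      intro s t hs ht h
      exact (List.Nodup.getElem_inj_iff hnd').mp h
    have huc : P'.head hne' ≠ c := by
      rw [hhead0, hcdef]
      intro h
      have := hinj _ _ _ _ h
      omega
    have hyA : P'[a+1]'(by omega) ∉ A := by
      rintro ⟨t, h, ht, heq⟩
      have := hinj _ _ _ _ heq
      omega
    have hyc : P'[a+1]'(by omega) ≠ c := by
      rw [hcdef]
      intro h
      have := hinj _ _ _ _ h
      omega
    obtain ⟨x', hx'A, b, hbA, hbc, hx'c, hadjxb⟩ := fan_cut_cross hcut hxA huc hyA hyc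
    obtain ⟨i, hiP, hia, hix⟩ := hx'A
    -- `1 ≤ i`
    have hblkP' : ∀ t (h : t < P'.length), 1 ≤ t →
        (G.Adj (P'.head hne') (P'[t]'h) ↔ t ≤ a) := by
      intro t h h1
      rw [← hgd P' t h]
      exact hblkP t h1 (by omega)
    have hi1 : 1 ≤ i := by
      by_contra h0
      have hi0 : i = 0 := by omega
      have hxu : x' = P'.head hne' := by
        rw [hhead0, ← hix]
        congr 1
      have hbP : b ∈ P' := hnbr P' hne' hnd' hc' hlen' b (by rw [← hxu]; exact hadjxb)
      obtain ⟨tb, htb, htbb⟩ := List.mem_iff_getElem.mp hbP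
      have htb1 : 1 ≤ tb := by
        by_contra h0'
        have hbu : b = P'.head hne' := by
          rw [← htbb, hhead0]
          congr 1
          omega
        rw [hxu, ← hbu] at hadjxb
        exact G.irrefl hadjxb
      have hadjub : G.Adj (P'.head hne') (P'[tb]'htb) := by
        rw [htbb, ← hxu]; exact hadjxb
      have htba : tb ≤ a := (hblkP' tb htb htb1).mp hadjub
      have htbna : tb ≠ a := by
        intro h
        apply hbc
        rw [← htbb, hcdef]
        congr 1
      exact hbA ⟨tb, htb, by omega, htbb⟩
    -- `b` lies on `P'`
    have hadjiu : G.Adj (P'.head hne') (P'[i+1]'(by omega)) :=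
      (hblkP' (i+1) (by omega) (by omega)).mpr (by omega)
    have hbP' : b ∈ P' := by
      by_contra hbnot
      obtain ⟨R', hneR, hpermR, hcR, hheadR, hlastR⟩ :=
        fan_rot P' hc' i hi1 (by omega) hne' hadjiu
      have hbR : b ∉ R' := fun h => hbnot (hpermR.mem_iff.mp h)
      have hcE : (b :: R').Chain' G.Adj := by
        unfold List.Chain'; rw [List.isChain_cons]
        refine ⟨?_, hcR⟩
        intro z hz
        rw [List.head?_eq_head hneR, Option.mem_some_iff] at hz
        rw [← hz, hheadR, hix]
        exact hadjxb.symm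
      have := hp_max (b :: R') (by simp) (List.nodup_cons.mpr ⟨hbR, hpermR.symm.nodup hnd'⟩) hcE
      rw [List.length_cons, hpermR.length_eq, hlen'] at this
      omega
    obtain ⟨m, hmP, hmb⟩ := List.mem_iff_getElem.mp hbP'
    have hma : a + 1 ≤ m := by
      have h1 : m ≠ a := by
        intro h
        apply hbc
        rw [← hmb, hcdef]
        congr 1
      have h2 : ¬ m < a := fun h => hbA ⟨m, hmP, h, hmb⟩
      omega
    -- `m ≤ p - 2`
    have hmp2 : m ≤ p - 2 := by
      by_contra hbig
      have hm1 : m = p - 1 := by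
        have : m < p := by rw [← hlen']; exact hmP
        omega
      have hadj2 : G.Adj (P'[(i+1)-1]'(by omega)) (P'.getLast hne') := by
        have e : P'[(i+1)-1]'(by omega) = P'[i]'hiP := by congr 1
        have e2 : P'.getLast hne' = b := by
          rw [hlastel, ← hmb]
          congr 1
          omega
        rw [e, hix, e2]
        exact hadjxb
      have hadj1 : G.Adj (P'.head hne') (P'[i+1]'(by omega)) := hadjiu
      obtain ⟨C, hCne, hCnd, hCc, hClen, hCcl⟩ :=
        fan_cross_list P' hne' hnd' hc' (i+1) (by omega) (by omega) hadj1 hadj2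
      exact claimA C hCne hCnd hCc (by rw [hClen, hlen']) hCcl
    -- construct the rerouted path Q
    have hmplen : m < P'.length := hmP
    have hseg1len : ((P'.drop (i+1)).take (m-1-i)).length = m-1-i := by
      rw [List.length_take, List.length_drop, hlen']
      omega
    have hseg1ne : ((P'.drop (i+1)).take (m-1-i)) ≠ [] := by
      intro h
      rw [h] at hseg1len
      simp at hseg1len
      omega
    have hdropm_ne : P'.drop m ≠ [] := by
      rw [ne_eq, List.drop_eq_nil_iff]
      omega
    have htake_ne : P'.take (i+1) ≠ [] := by
      rw [ne_eq, List.take_eq_nil_iff]; push_neg; exact ⟨by omega, hne'⟩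
    have hsplit : ((P'.drop (i+1)).take (m-1-i)) ++ P'.drop m = P'.drop (i+1) := by
      have e1 : P'.drop m = (P'.drop (i+1)).drop (m-1-i) := by
        rw [List.drop_drop]
        congr 1
        omega
      rw [e1, List.take_append_drop]
    have hQne : (((P'.drop (i+1)).take (m-1-i)).reverse ++ (P'.take (i+1) ++ P'.drop m)) ≠ [] := by simp [hseg1ne]
    have hQperm : (((P'.drop (i+1)).take (m-1-i)).reverse ++ (P'.take (i+1) ++ P'.drop m)).Perm P' := by
      have p1 : (((P'.drop (i+1)).take (m-1-i)).reverse ++ (P'.take (i+1) ++ P'.drop m)).Perm (((P'.drop (i+1)).take (m-1-i)) ++ (P'.take (i+1) ++ P'.drop m)) :=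
        List.Perm.append_right _ (List.reverse_perm _)
      have p2 : (P'.take (i+1) ++ (((P'.drop (i+1)).take (m-1-i)) ++ P'.drop m)).Perm P' := by
        rw [hsplit, List.take_append_drop]
      have p3 : (((P'.drop (i+1)).take (m-1-i)) ++ (P'.take (i+1) ++ P'.drop m)).Perm
          (P'.take (i+1) ++ (((P'.drop (i+1)).take (m-1-i)) ++ P'.drop m)) := by
        rw [← List.append_assoc, ← List.append_assoc]
        exact List.Perm.append_right _ List.perm_append_comm
      exact p1.trans (p3.trans p2)
    have hQnd : (((P'.drop (i+1)).take (m-1-i)).reverse ++ (P'.take (i+1) ++ P'.drop m)).Nodup := hQperm.symm.nodup hnd'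
    have hQlen : (((P'.drop (i+1)).take (m-1-i)).reverse ++ (P'.take (i+1) ++ P'.drop m)).length = p := by rw [hQperm.length_eq, hlen']
    have hc2 : (P'.take (i+1) ++ P'.drop m).Chain' G.Adj := by
      apply fan_chain_append (hc'.take _) (hc'.drop _) htake_ne hdropm_ne
      have e1 : (P'.take (i+1)).getLast htake_ne = P'[i]'hiP := by
        rw [List.getLast_eq_getElem, List.getElem_take]
        congr 1
        rw [List.length_take]
        omega
      have e2 : (P'.drop m).head hdropm_ne = P'[m]'hmP := List.head_drop _
      rw [e1, e2, hix, hmb]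
      exact hadjxb
    have hQc : (((P'.drop (i+1)).take (m-1-i)).reverse ++ (P'.take (i+1) ++ P'.drop m)).Chain' G.Adj := by
      apply fan_chain_append (fan_chain_reverse ((hc'.drop _).take _)) hc2
        (by simp [hseg1ne]) (by simp [htake_ne])
      have e1 : (((P'.drop (i+1)).take (m-1-i)).reverse).getLast (by simp [hseg1ne]) = P'[i+1]'(by omega) := by
        rw [List.getLast_reverse, List.head_take, List.head_drop]
      have e2 : (P'.take (i+1) ++ P'.drop m).head (by simp [htake_ne]) = P'.head hne' := by
        rw [List.head_append _, dif_neg (by simp [htake_ne]), List.head_take]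
      rw [e1, e2]
      exact hadjiu.symm
    have hQhead : (((P'.drop (i+1)).take (m-1-i)).reverse ++ (P'.take (i+1) ++ P'.drop m)).head hQne = P'[m-1]'(by omega) := by
      rw [List.head_append _, dif_neg (by simp [hseg1ne]), List.head_reverse]
      rw [List.getLast_eq_getElem, List.getElem_take, List.getElem_drop]
      congr 1
      rw [hseg1len]
      omega
    have hQlast : (((P'.drop (i+1)).take (m-1-i)).reverse ++ (P'.take (i+1) ++ P'.drop m)).getLast hQne = P'.getLast hne' := by
      rw [List.getLast_append _, dif_neg (by simp [htake_ne, hdropm_ne]),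
          List.getLast_append _, dif_neg (by simp [hdropm_ne]), List.getLast_drop]
    have hblkQ := blk (((P'.drop (i+1)).take (m-1-i)).reverse ++ (P'.take (i+1) ++ P'.drop m)) hQne hQnd hQc hQlen hQlast
    have ha' : G.degree ((((P'.drop (i+1)).take (m-1-i)).reverse ++ (P'.take (i+1) ++ P'.drop m)).head hQne) ≤ a := by
      have h1 := hM_max (((P'.drop (i+1)).take (m-1-i)).reverse ++ (P'.take (i+1) ++ P'.drop m)) hQne hQnd hQc hQlen
      rw [hQlast] at h1
      omega
    have hbQ : b ∈ (((P'.drop (i+1)).take (m-1-i)).reverse ++ (P'.take (i+1) ++ P'.drop m)) := hQperm.mem_iff.mpr hbP'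
    obtain ⟨tm, htmQ, htmb⟩ := List.mem_iff_getElem.mp hbQ
    have htm_lt : tm < p := by rw [← hQlen]; exact htmQ
    have hL1len : (((P'.drop (i+1)).take (m-1-i)).reverse).length = m-1-i := by
      rw [List.length_reverse, hseg1len]
    have htake_len : (P'.take (i+1)).length = i+1 := by
      rw [List.length_take]
      omega
    have htm_ge : m ≤ tm := by
      by_contra hlt'
      have hQtm := htmb
      rw [List.getElem_append] at hQtm
      by_cases hcase : tm < (((P'.drop (i+1)).take (m-1-i)).reverse).length
      · rw [dif_pos hcase] at hQtm
        rw [List.getElem_reverse, List.getElem_take, List.getElem_drop] at hQtm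
        rw [← hmb] at hQtm
        have := hinj _ _ _ _ hQtm
        rw [hseg1len] at this
        omega
      · rw [dif_neg hcase] at hQtm
        rw [List.getElem_append] at hQtm
        have hcase2 : tm - (((P'.drop (i+1)).take (m-1-i)).reverse).length < (P'.take (i+1)).length := by
          rw [htake_len, hL1len] at *
          omega
        rw [dif_pos hcase2] at hQtm
        rw [List.getElem_take] at hQtm
        rw [← hmb] at hQtm
        have := hinj _ _ _ _ hQtm
        rw [hL1len] at this hcase
        omega
    have hadjQ : G.Adj ((((P'.drop (i+1)).take (m-1-i)).reverse ++ (P'.take (i+1) ++ P'.drop m)).head hQne) ((((P'.drop (i+1)).take (m-1-i)).reverse ++ (P'.take (i+1) ++ P'.drop m)).getD tm d0) := by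
      rw [hgd (((P'.drop (i+1)).take (m-1-i)).reverse ++ (P'.take (i+1) ++ P'.drop m)) tm htmQ, htmb, hQhead, ← hmb]
      have e : P'[m]'hmP = P'[(m-1)+1]'(by omega) := by congr 1; omega
      rw [e]
      exact fan_chain_getElem hc' (by omega)
    have hfin := (hblkQ tm (by omega) htm_lt).mp hadjQ
    omega
  -- final case analysis
  have hsum : G.degree (P.head hPne) + G.degree (P.getLast hPne) ≤ p - 1 := by
    have hrne : P.reverse ≠ [] := by simp [hPne]
    have hnbr0 : ∀ z, G.Adj (P.head hPne) z → z ∈ P := hnbr P hPne hPnd hPc hPlen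
    have hnbrp : ∀ z, G.Adj (P.getLast hPne) z → z ∈ P := by
      intro z hz
      have := hnbr P.reverse hrne (by simpa using hPnd) (fan_chain_reverse hPc)
        (by simpa using hPlen) z (by rwa [List.head_reverse])
      simpa using this
    set S : Finset ℕ := (Finset.range p).filter
      (fun t => G.Adj (P.head hPne) (P.getD t d0)) with hS
    set Tt : Finset ℕ := (Finset.range p).filter
      (fun t => G.Adj (P.getLast hPne) (P.getD t d0)) with hTt
    have hScard : S.card = G.degree (P.head hPne) := by
      rw [hS, ← hPlen]
      exact fan_deg_count P hPnd d0 _ hnbr0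
    have hTcard : Tt.card = G.degree (P.getLast hPne) := by
      rw [hTt, ← hPlen]
      exact fan_deg_count P hPnd d0 _ hnbrp
    set T' : Finset ℕ := Tt.image (· + 1) with hT'
    have hT'card : T'.card = Tt.card := Finset.card_image_of_injective _ (by
      intro a b h
      simpa using h)
    have hgetD : ∀ t (h : t < P.length), P.getD t d0 = P[t]'h := fun t h =>
      List.getD_eq_getElem P d0 h
    have hSsub : S ⊆ Finset.Ico 1 p := by
      intro t ht
      rw [hS, Finset.mem_filter, Finset.mem_range] at ht
      rw [Finset.mem_Ico]
      refine ⟨?_, ht.1⟩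
      by_contra h0
      have ht0 : t = 0 := by omega
      have : P.getD t d0 = P.head hPne := by
        rw [ht0, hgetD 0 (by rw [hPlen]; omega)]
        exact (List.head_eq_getElem hPne).symm
      rw [this] at ht
      exact G.irrefl ht.2
    have hT'sub : T' ⊆ Finset.Ico 1 p := by
      intro t ht
      rw [hT', Finset.mem_image] at ht
      obtain ⟨s, hs, rfl⟩ := ht
      rw [hTt, Finset.mem_filter, Finset.mem_range] at hs
      rw [Finset.mem_Ico]
      refine ⟨by omega, ?_⟩
      by_contra hsp
      have hs1 : s = p - 1 := by omega
      have : P.getD s d0 = P.getLast hPne := by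
        rw [hs1, hgetD (p-1) (by rw [hPlen]; omega)]
        exact ((List.getLast_eq_getElem hPne).trans (by congr 1; rw [hPlen])).symm
      rw [this] at hs
      exact G.irrefl hs.2
    have hdisj : Disjoint S T' := by
      rw [Finset.disjoint_left]
      intro t htS htT'
      rw [hT', Finset.mem_image] at htT'
      obtain ⟨s, hs, rfl⟩ := htT'
      rw [hTt, Finset.mem_filter, Finset.mem_range] at hs
      rw [hS, Finset.mem_filter, Finset.mem_range] at htS
      have h1 : 1 ≤ s + 1 := by omega
      have h2 : s + 1 < P.length := by rw [hPlen]; exact htS.1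
      have hadj1 : G.Adj (P.head hPne) (P[s+1]'h2) := by
        rw [← hgetD _ h2]; exact htS.2
      have hadj2 : G.Adj (P[(s+1)-1]'(by omega)) (P.getLast hPne) := by
        have : P.getD s d0 = P[(s+1)-1]'(by omega) := by
          rw [hgetD s (by omega)]
          congr 1
        rw [this] at hs
        exact hs.2.symm
      obtain ⟨C, hCne, hCnd, hCc, hClen, hCcl⟩ :=
        fan_cross_list P hPne hPnd hPc (s+1) h1 h2 hadj1 hadj2
      exact claimA C hCne hCnd hCc (by rw [hClen, hPlen]) hCcl
    have hcup : (S ∪ T').card ≤ p - 1 := by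
      have := Finset.card_le_card (Finset.union_subset hSsub hT'sub)
      rwa [Nat.card_Ico] at this
    rw [Finset.card_union_of_disjoint hdisj, hScard, hT'card, hTcard] at hcup
    exact hcup
  by_cases h1 : (G.degree (P.head hPne) : ℝ) < (Fintype.card V : ℝ) / 2
  · exact key P hPne hPnd hPc hPlen hPM.symm h1
  · by_cases h2 : (G.degree (P.getLast hPne) : ℝ) < (Fintype.card V : ℝ) / 2
    · have hrne : P.reverse ≠ [] := by simp [hPne]
      apply key P.reverse hrne (by simpa using hPnd) (fan_chain_reverse hPc)
        (by simpa using hPlen)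
      · rw [List.head_reverse, List.getLast_reverse]
        omega
      · rw [List.head_reverse]
        exact h2
    · push_neg at h1 h2
      have : (Fintype.card V : ℝ) ≤ (G.degree (P.head hPne) : ℝ) +
          (G.degree (P.getLast hPne) : ℝ) := by linarith
      have hlt : G.degree (P.head hPne) + G.degree (P.getLast hPne) < Fintype.card V := by
        omega
      have hlt' : ((G.degree (P.head hPne) + G.degree (P.getLast hPne) : ℕ) : ℝ) <
          (Fintype.card V : ℝ) := by exact_mod_cast hlt
      push_cast at hlt'
      linarith

end MainProof
end FanHelpers

/-- Fan 1984: a 2-connected graph on `n ≥ 3` vertices in which every pair of vertices at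
distance two has a vertex of degree at least `n / 2` is hamiltonian. -/
theorem stmt_0 {V : Type*} [Fintype V] [DecidableEq V] (G : SimpleGraph V) [DecidableRel G.Adj]
    (hcard : 3 ≤ Fintype.card V) (hconn : KConnected 2 G)
    (hdeg : ∀ x y : V, G.dist x y = 2 →
      (Fintype.card V : ℝ) / 2 ≤ ((max (G.degree x) (G.degree y) : ℕ) : ℝ)) :
    G.IsHamiltonian := by
  exact stmt_0' G hcard hconn hdeg
end

section
/- Let G be a finite simple graph on at least 3 vertices. If the minimum degree of G satisfies δ(G) ≥ α̃(G), where α̃(G) is the bipartite independence number of G, then G is hamiltonian. -/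
open SimpleGraph

set_option linter.unusedSectionVars false
set_option maxHeartbeats 1600000

section MYhelpers

open SimpleGraph List

variable {V : Type*} [DecidableEq V] {G : SimpleGraph V}

/-- A list representing a cycle in `G`. -/
def MYCyc (G : SimpleGraph V) (l : List V) : Prop :=
  3 ≤ l.length ∧ l.Nodup ∧ List.IsChain G.Adj (l ++ l.take 1)

namespace MYCyc

lemma ne_nil {l : List V} (h : MYCyc G l) : l ≠ [] := by
  intro hl; rw [hl] at h; simp [MYCyc] at h

lemma chain' {l : List V} (h : MYCyc G l) : l.IsChain G.Adj :=
  (List.isChain_append.1 h.2.2).1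

lemma rotate_one {l : List V} (h : MYCyc G l) : MYCyc G (l.rotate 1) := by
  obtain ⟨hlen, hnd, hch⟩ := h
  match l, hlen with
  | a :: t, hlen =>
    have ht : t ≠ [] := by intro h; simp [h] at hlen
    obtain ⟨b, t', rfl⟩ := List.exists_cons_of_ne_nil ht
    rw [List.rotate_cons_succ, List.rotate_zero]
    have hch' : List.IsChain G.Adj ((a :: b :: t') ++ [a]) := by simpa using hch
    have h1 : List.IsChain G.Adj (b :: t' ++ [a]) := (List.isChain_cons.1 (by simpa using hch')).2
    have hab : G.Adj a b := by
      rcases List.isChain_cons_cons.1 (by simpa using hch') with ⟨h, _⟩; exact h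
    refine ⟨by simp at hlen ⊢; omega, ?_, ?_⟩
    · simp only [List.nodup_append, List.nodup_cons] at hnd ⊢
      refine ⟨hnd.2, by simp, ?_⟩
      intro x hx; simp only [List.mem_singleton, forall_eq]
      rintro rfl
      exact hnd.1 hx
    · have htake : ((b :: t') ++ [a]).take 1 = [b] := by simp
      rw [show (b :: t' ++ [a]) = ((b :: t') ++ [a]) by simp, htake]
      rw [List.isChain_append]
      refine ⟨by simpa using h1, List.isChain_singleton b, ?_⟩
      intro x hx y hy
      simp only [List.head?_cons, Option.mem_some_iff] at hy
      have hgl : ((b :: t') ++ [a]).getLast? = some a := by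
        rw [List.getLast?_append] <;> simp
      rw [hgl] at hx
      simp only [Option.mem_some_iff] at hx
      subst hx; subst hy; exact hab

lemma rotate {l : List V} (h : MYCyc G l) (m : ℕ) : MYCyc G (l.rotate m) := by
  induction m with
  | zero => simpa using h
  | succ k ih =>
    have := ih.rotate_one
    rwa [List.rotate_rotate] at this

lemma closing {l : List V} (h : MYCyc G l) (hne : l ≠ []) :
    G.Adj (l.getLast hne) (l.head hne) := by
  obtain ⟨hlen, hnd, hch⟩ := h
  obtain ⟨a, t, rfl⟩ := List.exists_cons_of_ne_nil hne
  have hch2 : List.IsChain G.Adj ((a :: t) ++ [a]) := by simpa using hch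
  rcases List.isChain_append.1 hch2 with ⟨_, _, hlast⟩
  have hg : (a :: t).getLast? = some ((a :: t).getLast hne) :=
    List.getLast?_eq_getLast hne
  have := hlast _ (by rw [hg]; rfl) a (by simp)
  simpa using this

end MYCyc

/-- the cyclic successor of `x` on the cycle list `l`. -/
def nxt (l : List V) (x : V) : V := ((l.rotate (l.idxOf x + 1)).head?).getD x

namespace MYCyc

lemma length_pos {l : List V} (h : MYCyc G l) : 0 < l.length := by
  have := h.1; omega

lemma rot_ne_nil {l : List V} (h : MYCyc G l) (m : ℕ) : l.rotate m ≠ [] := by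
  intro hc
  have := congrArg List.length hc
  simp at this
  exact h.ne_nil this

lemma head_rotate {l : List V} (h : MYCyc G l) (m : ℕ) (hne : l.rotate m ≠ []) :
    (l.rotate m).head hne = l[m % l.length]'(Nat.mod_lt _ h.length_pos) := by
  rw [List.head_eq_getElem]
  rw [List.getElem_rotate]
  simp

lemma getLast_rotate {l : List V} (h : MYCyc G l) (m : ℕ) (hne : l.rotate m ≠ []) :
    (l.rotate m).getLast hne
      = l[(l.length - 1 + m) % l.length]'(Nat.mod_lt _ h.length_pos) := by
  rw [List.getLast_eq_getElem]
  rw [List.getElem_rotate]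
  congr 1
  simp

lemma nxt_eq_getElem {l : List V} (h : MYCyc G l) (x : V) (hx : x ∈ l) :
    nxt l x = l[(l.idxOf x + 1) % l.length]'(Nat.mod_lt _ h.length_pos) := by
  unfold nxt
  rw [List.head?_eq_head (h.rot_ne_nil _), h.head_rotate _ (h.rot_ne_nil _)]
  simp

lemma nxt_mem {l : List V} (h : MYCyc G l) (x : V) (hx : x ∈ l) : nxt l x ∈ l := by
  rw [h.nxt_eq_getElem x hx]; exact List.getElem_mem _

lemma head_rotAt {l : List V} (h : MYCyc G l) (x : V) (hx : x ∈ l) :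
    (l.rotate (l.idxOf x + 1)).head (h.rot_ne_nil _) = nxt l x := by
  rw [h.nxt_eq_getElem x hx, h.head_rotate _ (h.rot_ne_nil _)]

lemma getLast_rotAt {l : List V} (h : MYCyc G l) (x : V) (hx : x ∈ l) :
    (l.rotate (l.idxOf x + 1)).getLast (h.rot_ne_nil _) = x := by
  rw [h.getLast_rotate _ (h.rot_ne_nil _)]
  have hidx : l.idxOf x < l.length := List.idxOf_lt_length_iff.2 hx
  have hlp := h.length_pos
  have : (l.length - 1 + (l.idxOf x + 1)) % l.length = l.idxOf x := by
    have : l.length - 1 + (l.idxOf x + 1) = l.idxOf x + l.length := by omega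
    rw [this, Nat.add_mod_right, Nat.mod_eq_of_lt hidx]
  simp only [this]
  exact List.getElem_idxOf hidx

lemma nxt_adj {l : List V} (h : MYCyc G l) (x : V) (hx : x ∈ l) : G.Adj x (nxt l x) := by
  have hr := h.rotate (l.idxOf x + 1)
  have := hr.closing (h.rot_ne_nil _)
  rwa [h.getLast_rotAt x hx, h.head_rotAt x hx] at this

lemma mod_succ_inj {a b n : ℕ} (ha : a < n) (hb : b < n) (hab : (a+1) % n = (b+1) % n) :
    a = b := by
  rcases Nat.lt_or_ge (a+1) n with h1 | h1 <;> rcases Nat.lt_or_ge (b+1) n with h2 | h2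
  · rwa [Nat.mod_eq_of_lt h1, Nat.mod_eq_of_lt h2, Nat.add_right_cancel_iff] at hab
  · have hb1 : b + 1 = n := by omega
    rw [Nat.mod_eq_of_lt h1, hb1, Nat.mod_self] at hab; omega
  · have ha1 : a + 1 = n := by omega
    rw [Nat.mod_eq_of_lt h2, ha1, Nat.mod_self] at hab; omega
  · omega

lemma nxt_inj {l : List V} (h : MYCyc G l) {x y : V} (hx : x ∈ l) (hy : y ∈ l)
    (hxy : nxt l x = nxt l y) : x = y := by
  rw [h.nxt_eq_getElem x hx, h.nxt_eq_getElem y hy] at hxy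
  have hix : l.idxOf x < l.length := List.idxOf_lt_length_iff.2 hx
  have hiy : l.idxOf y < l.length := List.idxOf_lt_length_iff.2 hy
  have h2 := (List.Nodup.getElem_inj_iff h.2.1).1 hxy
  have := mod_succ_inj hix hiy h2
  rw [← List.getElem_idxOf hix, ← List.getElem_idxOf hiy]
  congr 1

/-- characterization: if some rotation of `l` has head `y` and last `x`, then `nxt l x = y`. -/
lemma nxt_eq_of_rotate {l : List V} (h : MYCyc G l) (m : ℕ) {x y : V}
    (hhead : (l.rotate m).head (h.rot_ne_nil m) = y)
    (hlast : (l.rotate m).getLast (h.rot_ne_nil m) = x) :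
    nxt l x = y := by
  have hlp := h.length_pos
  rw [h.head_rotate m] at hhead
  rw [h.getLast_rotate m] at hlast
  have hxmem : x ∈ l := hlast ▸ List.getElem_mem _
  have hidx : l.idxOf x = (l.length - 1 + m) % l.length := by
    rw [← hlast]; exact List.Nodup.idxOf_getElem h.2.1 _ _
  rw [h.nxt_eq_getElem x hxmem, ← hhead]
  congr 1
  rw [hidx, Nat.mod_add_mod]
  have : l.length - 1 + m + 1 = m + l.length := by omega
  rw [this, Nat.add_mod_right]

end MYCyc

lemma exists_cyc_of_minDegree [Fintype V] (G : SimpleGraph V) [DecidableRel G.Adj]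
    (hV : Nonempty V) (hdeg : 2 ≤ G.minDegree) :
    ∃ l : List V, MYCyc G l ∧ G.minDegree + 1 ≤ l.length := by
  classical
  set S : Set ℕ := {k | ∃ p : List V, p.Nodup ∧ p.IsChain G.Adj ∧ p ≠ [] ∧ p.length = k} with hS
  obtain ⟨v⟩ := hV
  have hne : S.Nonempty := ⟨1, [v], by simp⟩
  have hbdd : BddAbove S := by
    refine ⟨Fintype.card V, ?_⟩
    rintro k ⟨p, hnd, -, -, rfl⟩
    exact hnd.length_le_card
  obtain ⟨p, hnd, hch, hpne, hplen⟩ := Nat.sSup_mem hne hbdd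
  have hmax : ∀ q : List V, q.Nodup → q.IsChain G.Adj → q ≠ [] → q.length ≤ sSup S :=
    fun q h1 h2 h3 => le_csSup hbdd ⟨q, h1, h2, h3, rfl⟩
  set a := p.head hpne with ha
  have hamem : a ∈ p := List.head_mem hpne
  have hhead? : p.head? = some a := List.head?_eq_head hpne
  -- all neighbors of a are on p
  have hnbr : ∀ b, G.Adj b a → b ∈ p := by
    intro b hadj
    by_contra hb
    have hq : (b :: p).Nodup := List.nodup_cons.2 ⟨hb, hnd⟩
    have hqc : (b :: p).IsChain G.Adj := List.isChain_cons.2 ⟨by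
      intro y hy; rw [hhead?] at hy; simp at hy; rwa [← hy], hch⟩
    have := hmax _ hq hqc (by simp)
    simp [hplen] at this
  set K : Finset ℕ := (G.neighborFinset a).image (fun u => p.idxOf u) with hK
  have hKcard : K.card = G.degree a := by
    rw [hK, Finset.card_image_of_injOn, card_neighborFinset_eq_degree]
    intro u hu w hw huw
    rw [Finset.mem_coe, mem_neighborFinset] at hu hw
    have hup : u ∈ p := hnbr u hu.symm
    have hwp : w ∈ p := hnbr w hw.symm
    have h1 : p.idxOf u < p.length := List.idxOf_lt_length_iff.2 hup
    have h2 : p.idxOf w < p.length := List.idxOf_lt_length_iff.2 hwp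
    rw [← List.getElem_idxOf h1, ← List.getElem_idxOf h2]
    congr 1
  have hKpos : 0 < K.card := by
    rw [hKcard]
    have := G.minDegree_le_degree a
    omega
  have hKne : K.Nonempty := Finset.card_pos.1 hKpos
  set m := K.max' hKne with hm
  have hmK : m ∈ K := K.max'_mem hKne
  have hmge : G.minDegree ≤ m := by
    have hsub : K ⊆ Finset.Icc 1 m := by
      intro k hk
      refine Finset.mem_Icc.2 ⟨?_, K.le_max' k hk⟩
      obtain ⟨w, hw, rfl⟩ := Finset.mem_image.1 hk
      rw [mem_neighborFinset] at hw
      rcases Nat.eq_zero_or_pos (p.idxOf w) with h | h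
      case inr => exact h
      exfalso
      have hwp : w ∈ p := hnbr w hw.symm
      have hlt := List.idxOf_lt_length_iff.2 hwp
      have h9 : p[p.idxOf w]'hlt = w := List.getElem_idxOf hlt
      have h0 : p[0]'(by omega) = w := (getElem_congr_idx h).symm.trans h9
      rw [← List.head_eq_getElem_zero hpne] at h0
      exact (G.ne_of_adj hw) (by rw [← ha] at h0; rw [h0])
    have := Finset.card_le_card hsub
    rw [Nat.card_Icc] at this
    have h3 := G.minDegree_le_degree a
    omega
  clear_value m
  clear hm
  obtain ⟨u, hu, hum⟩ := Finset.mem_image.1 hmK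
  subst hum
  rw [mem_neighborFinset] at hu
  have hup : u ∈ p := hnbr u hu.symm
  have hmlt : p.idxOf u < p.length := List.idxOf_lt_length_iff.2 hup
  set m := p.idxOf u with hm2
  -- the cycle
  refine ⟨p.take (m+1), ⟨?_, ?_, ?_⟩, ?_⟩
  · rw [List.length_take]
    have h2 : 2 ≤ m := le_trans hdeg hmge
    omega
  · exact hnd.sublist (List.take_sublist _ _)
  · have htk1 : (p.take (m+1)).take 1 = [a] := by
      rw [List.take_take]
      have : min 1 (m+1) = 1 := by omega
      rw [this]
      rw [List.take_one, hhead?]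
      rfl
    rw [htk1, List.isChain_append]
    refine ⟨hch.take _, List.isChain_singleton a, ?_⟩
    intro x hx y hy
    simp only [List.head?_cons, Option.mem_some_iff] at hy
    have hlen : (p.take (m+1)).length = m + 1 := by rw [List.length_take]; omega
    have hnenil : p.take (m+1) ≠ [] := by
      intro hcon; rw [hcon] at hlen; simp at hlen
    rw [List.getLast?_eq_getLast_of_ne_nil hnenil, Option.mem_some_iff] at hx
    have hxu : x = u := by
      rw [← hx, List.getLast_eq_getElem]
      have hgm : (p.take (m+1))[(p.take (m+1)).length - 1]'(by omega) = p[m]'hmlt := by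
        rw [getElem_congr_idx (show (p.take (m+1)).length - 1 = m by omega)]
        exact List.getElem_take
      rw [hgm]
      exact List.getElem_idxOf hmlt
    subst hxu; subst hy
    exact hu.symm
  · rw [List.length_take]
    omega

lemma exists_walk_of_chain' :
    ∀ (l : List V) (a b : V), List.IsChain G.Adj (a :: (l ++ [b])) →
      ∃ p : G.Walk a b, p.support = a :: (l ++ [b])
  | [], a, b, h => by
    have hab : G.Adj a b := (List.isChain_cons_cons.1 h).1
    exact ⟨Walk.cons hab Walk.nil, by simp⟩
  | c :: l, a, b, h => by
    rw [List.cons_append] at h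
    have hac : G.Adj a c := (List.isChain_cons_cons.1 h).1
    obtain ⟨q, hq⟩ := exists_walk_of_chain' l c b (List.isChain_cons_cons.1 h).2
    exact ⟨Walk.cons hac q, by simp [hq]⟩

lemma dart_index_of_mem_darts {u v : V} (p : G.Walk u v) (d : G.Dart) (hd : d ∈ p.darts) :
    ∃ i, ∃ h : i + 1 < p.support.length,
      p.support[i]'(by omega) = d.fst ∧ p.support[i+1]'h = d.snd := by
  induction p with
  | nil => simp at hd
  | @cons a b c hadj q ih =>
    rw [Walk.darts_cons, List.mem_cons] at hd
    have hqpos : 0 < q.support.length := List.length_pos_iff.2 q.support_ne_nil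
    rcases hd with rfl | hd
    · refine ⟨0, ?_, ?_, ?_⟩
      · rw [Walk.support_cons]; simpa using hqpos
      · exact (getElem_congr_coll (Walk.support_cons hadj q)).trans (List.getElem_cons_zero _ _ _)
      · refine (getElem_congr_coll (Walk.support_cons hadj q)).trans ?_
        rw [List.getElem_cons_succ]
        exact (getElem_congr_coll q.support_eq_cons).trans (List.getElem_cons_zero _ _ _)
    · obtain ⟨i, hlt, h1, h2⟩ := ih hd
      refine ⟨i + 1, ?_, ?_, ?_⟩
      · rw [Walk.support_cons]; simpa using Nat.succ_lt_succ hlt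
      · refine (getElem_congr_coll (Walk.support_cons hadj q)).trans ?_
        rw [List.getElem_cons_succ]; exact h1
      · refine (getElem_congr_coll (Walk.support_cons hadj q)).trans ?_
        rw [List.getElem_cons_succ]; exact h2

lemma MYCyc.isHamiltonian [Fintype V] {l : List V} (h : MYCyc G l)
    (hall : ∀ v : V, v ∈ l) : G.IsHamiltonian := by
  intro _
  obtain ⟨hlen, hnd, hch⟩ := h
  obtain ⟨a, T, rfl⟩ := List.exists_cons_of_ne_nil (show l ≠ [] by rintro rfl; simp at hlen)
  have hch2 : List.IsChain G.Adj (a :: (T ++ [a])) := by simpa using hch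
  have hT : T ≠ [] := by rintro rfl; simp at hlen
  obtain ⟨b, T', rfl⟩ := List.exists_cons_of_ne_nil hT
  rw [List.cons_append] at hch2
  have hab : G.Adj a b := (List.isChain_cons_cons.1 hch2).1
  obtain ⟨q, hq⟩ := exists_walk_of_chain' (G := G) T' b a (List.isChain_cons_cons.1 hch2).2
  have hqnodup : q.support.Nodup := by
    rw [hq]
    have : (a :: (b :: T')).Nodup := hnd
    rw [List.nodup_cons] at this
    refine List.Nodup.cons ?_ ?_
    · intro hbmem
      rcases List.mem_append.1 hbmem with h1 | h1
      · exact (List.nodup_cons.1 this.2).1 h1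
      · simp at h1
        exact G.ne_of_adj hab h1.symm
    · rw [List.nodup_append]
      refine ⟨(List.nodup_cons.1 this.2).2, by simp, ?_⟩
      intro x hx
      simp only [List.mem_singleton, forall_eq]
      rintro rfl
      exact this.1 (by simp [hx])
  have hqpath : q.IsPath := Walk.IsPath.mk' hqnodup
  have hlensupp : q.support.length = T'.length + 2 := by rw [hq]; simp
  have hedge : s(a, b) ∉ q.edges := by
    intro hmem
    unfold Walk.edges at hmem
    obtain ⟨d, hd, hde⟩ := List.mem_map.1 hmem
    rw [SimpleGraph.dart_edge_eq_mk'_iff'] at hde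
    -- positions of a and b in q.support
    have hidxa : ∀ (i : ℕ) (hi : i < q.support.length), q.support[i]'hi = a →
        i = q.support.length - 1 := by
      intro i hi hia
      have hgl? : q.support.getLast? = some a := by
        rw [hq, List.getLast?_eq_getLast_of_ne_nil (by simp)]
        congr 1
        rw [List.getLast_cons (by simp)]
        simp
      have hgl : q.support.getLast q.support_ne_nil = a := by
        have := List.getLast?_eq_getLast_of_ne_nil q.support_ne_nil
        rw [this] at hgl?
        exact Option.some.inj hgl?
      have hlast : q.support[q.support.length - 1]'(by omega) = a :=
        (List.getLast_eq_getElem q.support_ne_nil).symm.trans hgl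
      exact (List.Nodup.getElem_inj_iff hqnodup).1 (hia.trans hlast.symm)
    have hidxb : ∀ (i : ℕ) (hi : i < q.support.length), q.support[i]'hi = b → i = 0 := by
      intro i hi hib
      have hhead : q.support[0]'(by omega) = b := by
        have h1 : q.support.head q.support_ne_nil = b := by
          have : q.support.head? = some b := by rw [hq]; rfl
          rw [List.head?_eq_head q.support_ne_nil] at this
          exact Option.some.inj this
        exact (List.head_eq_getElem_zero q.support_ne_nil).symm.trans h1
      exact (List.Nodup.getElem_inj_iff hqnodup).1 (hib.trans hhead.symm)
    obtain ⟨i, hlt, h1, h2⟩ := dart_index_of_mem_darts q d hd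
    rcases hde with ⟨hfa, hfb⟩ | ⟨hfb, hfa⟩
    · -- d = (a, b) : a at position i, but a only at last position
      have := hidxa i (by omega) (by rw [h1, hfa])
      omega
    · -- d = (b, a) : b at i → i = 0 ; a at i+1 → i+1 = len - 1
      have hi0 := hidxb i (by omega) (by rw [h1, hfb])
      have hi1 := hidxa (i+1) hlt (by rw [h2, hfa])
      rw [hlensupp] at hi1
      simp at hlen
      omega
  have hcyc : (Walk.cons hab q).IsCycle := (Walk.cons_isCycle_iff q hab).2 ⟨hqpath, hedge⟩
  refine ⟨a, Walk.cons hab q, hcyc, ?_⟩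
  intro v
  have hnotnil : ¬(Walk.cons hab q).Nil := by simp
  rw [show (Walk.cons hab q).tail.support = (Walk.cons hab q).support.tail by rw [← Walk.cons_support_tail hnotnil]; rfl]
  have hsupp : (Walk.cons hab q).support = a :: (b :: T' ++ [a]) := by
    rw [Walk.support_cons, hq]; simp
  rw [hsupp]
  simp only [List.tail_cons]
  have hperm : (b :: T' ++ [a]).Perm (a :: b :: T') := by
    have := List.perm_append_singleton a (b :: T')
    simpa using this
  rw [List.Perm.count_eq hperm]
  exact List.count_eq_one_of_mem hnd (hall v)

/-- vertices reachable from `v` by walks avoiding `F`. -/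
def HSet (G : SimpleGraph V) (F : Finset V) (v : V) : Set V :=
  {u | ∃ p : G.Walk v u, ∀ w ∈ p.support, w ∉ F}

namespace HSet

lemma v_mem {F : Finset V} {v : V} (hv : v ∉ F) : v ∈ HSet G F v :=
  ⟨Walk.nil, by simp [hv]⟩

lemma not_mem_F {F : Finset V} {v u : V} (hu : u ∈ HSet G F v) : u ∉ F := by
  obtain ⟨p, hp⟩ := hu
  exact hp u (Walk.end_mem_support p)

lemma ext {F : Finset V} {v u w : V} (hu : u ∈ HSet G F v) (hadj : G.Adj u w)
    (hw : w ∉ F) : w ∈ HSet G F v := by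
  obtain ⟨p, hp⟩ := hu
  refine ⟨p.concat hadj, ?_⟩
  intro x hx
  rw [Walk.support_concat] at hx
  rcases List.mem_append.1 hx with h | h
  · exact hp x h
  · simp at h; rwa [h]

lemma walk_in {F : Finset V} {v h1 w : V} (hh1 : h1 ∈ HSet G F v)
    (q : G.Walk h1 w) (hq : ∀ x ∈ q.support, x ∉ F) : w ∈ HSet G F v := by
  obtain ⟨p, hp⟩ := hh1
  refine ⟨p.append q, ?_⟩
  intro x hx
  rw [Walk.support_append] at hx
  rcases List.mem_append.1 hx with h | h
  · exact hp x h
  · exact hq x (List.mem_of_mem_tail h)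

lemma path {F : Finset V} {v h1 h2 : V} (hh1 : h1 ∈ HSet G F v) (hh2 : h2 ∈ HSet G F v) :
    ∃ L : List V, L ≠ [] ∧ L.Nodup ∧ L.IsChain G.Adj ∧ L.head? = some h1 ∧
      L.getLast? = some h2 ∧ ∀ w ∈ L, w ∈ HSet G F v := by
  obtain ⟨p1, hp1⟩ := hh1
  obtain ⟨p2, hp2⟩ := hh2
  set q : G.Walk h1 h2 := p1.reverse.append p2 with hqdef
  have hqsup : ∀ x ∈ q.support, x ∉ F := by
    intro x hx
    rw [hqdef, Walk.support_append] at hx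
    rcases List.mem_append.1 hx with h | h
    · rw [Walk.support_reverse] at h
      exact hp1 x (List.mem_reverse.1 h)
    · exact hp2 x (List.mem_of_mem_tail h)
  set q' := q.bypass with hq'
  have hq'path : q'.IsPath := Walk.bypass_isPath q
  have hq'sub : ∀ x ∈ q'.support, x ∈ q.support :=
    fun x hx => Walk.support_bypass_subset q hx
  refine ⟨q'.support, q'.support_ne_nil, hq'path.support_nodup, Walk.isChain_adj_support q', ?_, ?_, ?_⟩
  · conv_lhs => rw [q'.support_eq_cons]
    rfl
  · rw [← List.head?_reverse, ← Walk.support_reverse]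
    conv_lhs => rw [q'.reverse.support_eq_cons]
    rfl
  · intro w hw
    refine walk_in ⟨p1, hp1⟩ (q'.takeUntil w hw) ?_
    intro x hx
    exact hqsup x (hq'sub x (Walk.support_takeUntil_subset q' hw hx))

end HSet

section Surgery

variable {C : List V} {v : V}

lemma flip_adj : flip G.Adj = G.Adj := by
  ext x y; exact ⟨fun h => h.symm, fun h => h.symm⟩

lemma disj_CL {L : List V} (hL : ∀ w ∈ L, w ∈ HSet G C.toFinset v) (r : List V)
    (hr : ∀ a ∈ r, a ∈ C) : r.Disjoint L := by
  intro a ha hb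
  exact HSet.not_mem_F (hL a hb) (List.mem_toFinset.2 (hr a ha))

lemma surgeryA (hC : MYCyc G C)
    (hmax : ∀ l : List V, MYCyc G l → l.length ≤ C.length)
    {x h1 h2 : V} (hx : x ∈ C)
    (hh1 : h1 ∈ HSet G C.toFinset v) (hh2 : h2 ∈ HSet G C.toFinset v)
    (hadj1 : G.Adj x h1) (hadj2 : G.Adj (nxt C x) h2) : False := by
  obtain ⟨L, hLne, hLnd, hLch, hLh, hLl, hLmem⟩ := HSet.path hh1 hh2
  set r := C.rotate (C.idxOf x + 1) with hrdef
  have hrcyc : MYCyc G r := hC.rotate _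
  have hrne : r ≠ [] := hC.rot_ne_nil _
  have hrmem : ∀ a ∈ r, a ∈ C := fun a ha => (List.mem_rotate).1 ha
  set M := r ++ L with hMdef
  have hMcyc : MYCyc G M := by
    refine ⟨?_, ?_, ?_⟩
    · rw [hMdef, List.length_append, List.length_rotate]
      have := hC.1; omega
    · rw [hMdef, List.nodup_append]
      exact ⟨hrcyc.2.1, hLnd, fun a ha b hb hab => disj_CL hLmem r hrmem ha (hab ▸ hb)⟩
    · have htk : M.take 1 = [nxt C x] := by
        rw [hMdef, List.take_append_of_le_length (by
          have : 0 < r.length := List.length_pos_iff.2 hrne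
          omega)]
        rw [List.take_one]
        rw [List.head?_eq_head hrne, hC.head_rotAt x hx]
        rfl
      rw [htk, hMdef, List.append_assoc, List.isChain_append]
      refine ⟨hrcyc.chain', ?_, ?_⟩
      · rw [List.isChain_append]
        refine ⟨hLch, List.isChain_singleton _, ?_⟩
        intro p hp q hq
        rw [hLl] at hp
        simp only [Option.mem_some_iff, List.head?_cons] at hp hq
        subst hp; subst hq
        exact hadj2.symm
      · intro p hp q hq
        rw [List.getLast?_eq_getLast_of_ne_nil hrne, Option.mem_some_iff] at hp
        rw [hC.getLast_rotAt x hx] at hp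
        rw [List.head?_append, hLh] at hq
        simp only [Option.some_or, Option.mem_some_iff] at hq
        subst hp; subst hq
        exact hadj1
  have hle := hmax M hMcyc
  rw [hMdef, List.length_append, List.length_rotate] at hle
  have : 0 < L.length := List.length_pos_iff.2 hLne
  omega

lemma surgeryB (hC : MYCyc G C)
    (hmax : ∀ l : List V, MYCyc G l → l.length ≤ C.length)
    {x1 x2 h1 h2 : V} (hx1 : x1 ∈ C) (hx2 : x2 ∈ C) (hxne : x1 ≠ x2)
    (hh1 : h1 ∈ HSet G C.toFinset v) (hh2 : h2 ∈ HSet G C.toFinset v)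
    (hadj1 : G.Adj x1 h1) (hadj2 : G.Adj x2 h2)
    (hyy : G.Adj (nxt C x1) (nxt C x2)) : False := by
  obtain ⟨L, hLne, hLnd, hLch, hLh, hLl, hLmem⟩ := HSet.path hh2 hh1
  set y1 := nxt C x1 with hy1
  set y2 := nxt C x2 with hy2
  have hyne : y1 ≠ y2 := fun hcon => hxne (hC.nxt_inj hx1 hx2 hcon)
  set r := C.rotate (C.idxOf x1 + 1) with hrdef
  have hrcyc : MYCyc G r := hC.rotate _
  have hrne : r ≠ [] := hC.rot_ne_nil _
  have hrmem : ∀ a ∈ r, a ∈ C := fun a ha => (List.mem_rotate).1 ha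
  have hrhead : r.head hrne = y1 := hC.head_rotAt x1 hx1
  have hrlast : r.getLast hrne = x1 := hC.getLast_rotAt x1 hx1
  have hrc : r = y1 :: r.tail := by rw [← hrhead]; exact (List.cons_head_tail hrne).symm
  have hy2r : y2 ∈ r := List.mem_rotate.2 (hC.nxt_mem x2 hx2)
  have hy2T : y2 ∈ r.tail := by
    rcases List.mem_cons.1 (by rw [← hrc]; exact hy2r) with h | h
    · exact absurd h hyne.symm
    · exact h
  obtain ⟨P, Q, hPQ⟩ := List.append_of_mem hy2T
  have hrPQ : r = (y1 :: P) ++ (y2 :: Q) := by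
    rw [hrc, hPQ]; simp
  -- identify getLast (y1 :: P) = x2
  have hlen1 : (y1 :: P).length ≤ r.length := by rw [hrPQ]; simp
  have hr' : r.rotate (y1 :: P).length = (y2 :: Q) ++ (y1 :: P) := by
    rw [hrPQ, List.rotate_eq_drop_append_take (by simpa using hlen1)]
    rw [List.drop_left, List.take_left]
  have hr'2 : C.rotate (C.idxOf x1 + 1 + (y1 :: P).length) = (y2 :: Q) ++ (y1 :: P) := by
    rw [← List.rotate_rotate, ← hrdef, hr']
  set m := C.idxOf x1 + 1 + (y1 :: P).length with hmdef
  have hne' : C.rotate m ≠ [] := hC.rot_ne_nil m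
  have hhead' : (C.rotate m).head hne' = y2 := by
    have : (C.rotate m).head? = some y2 := by
      rw [hr'2]; rfl
    rw [List.head?_eq_head hne'] at this
    exact Option.some.inj this
  have hglP : ∃ hh : (y1 :: P) ≠ [], True := ⟨by simp, trivial⟩
  have hlast' : (C.rotate m).getLast hne' = (y1 :: P).getLast (by simp) := by
    have h1' : (C.rotate m).getLast? = some ((y1 :: P).getLast (by simp)) := by
      rw [hr'2, List.getLast?_append, List.getLast?_eq_getLast_of_ne_nil (l := y1 :: P) (by simp)]
      rfl
    rw [List.getLast?_eq_getLast_of_ne_nil hne'] at h1'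
    exact Option.some.inj h1'
  have hz := hC.nxt_eq_of_rotate m hhead' hlast'
  have hzC : (y1 :: P).getLast (by simp) ∈ C := by
    have : (y1 :: P).getLast (by simp) ∈ (y1 :: P) := List.getLast_mem _
    exact hrmem _ (by rw [hrPQ]; exact List.mem_append_left _ this)
  have hPx2 : (y1 :: P).getLast (by simp) = x2 := hC.nxt_inj hzC hx2 (by rw [hz])
  -- getLast (y2 :: Q) = x1
  have hQx1 : (y2 :: Q).getLast (by simp) = x1 := by
    have h1' : r.getLast? = some ((y2 :: Q).getLast (by simp)) := by
      rw [hrPQ, List.getLast?_append, List.getLast?_eq_getLast_of_ne_nil (l := y2 :: Q) (by simp)]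
      rfl
    rw [List.getLast?_eq_getLast_of_ne_nil hrne, hrlast] at h1'
    exact (Option.some.inj h1').symm
  -- chain pieces of r
  have hrch : List.IsChain G.Adj ((y1 :: P) ++ (y2 :: Q)) := by rw [← hrPQ]; exact hrcyc.chain'
  rcases List.isChain_append.1 hrch with ⟨hch1, hch2, _⟩
  -- the new cycle
  set M := (y1 :: P) ++ L ++ (y2 :: Q).reverse with hMdef
  have hMlen : M.length = r.length + L.length := by
    rw [hMdef, hrPQ]; simp; omega
  have hMcyc : MYCyc G M := by
    refine ⟨?_, ?_, ?_⟩
    · rw [hMlen, List.length_rotate]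
      have := hC.1; omega
    · have hperm : M.Perm (r ++ L) := by
        rw [hMdef, hrPQ]
        calc (y1 :: P) ++ L ++ (y2 :: Q).reverse
            ~ (y1 :: P) ++ ((y2 :: Q).reverse ++ L) := by
              rw [List.append_assoc]
              exact List.Perm.append_left _ (List.perm_append_comm)
          _ ~ (y1 :: P) ++ ((y2 :: Q) ++ L) := by
              refine List.Perm.append_left _ (List.Perm.append_right _ ?_)
              exact List.reverse_perm _
          _ ~ ((y1 :: P) ++ (y2 :: Q)) ++ L := by rw [List.append_assoc]
      refine (hperm.nodup_iff).2 ?_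
      rw [List.nodup_append]
      exact ⟨hrcyc.2.1, hLnd, fun a ha b hb hab => disj_CL hLmem r hrmem ha (hab ▸ hb)⟩
    · have htk : M.take 1 = [y1] := by rw [hMdef]; rfl
      rw [htk, hMdef]
      rw [List.append_assoc, List.append_assoc, List.isChain_append]
      refine ⟨hch1, ?_, ?_⟩
      · rw [List.isChain_append]
        refine ⟨hLch, ?_, ?_⟩
        · rw [List.isChain_append]
          refine ⟨?_, List.isChain_singleton _, ?_⟩
          · rw [List.isChain_reverse, show (fun a b => G.Adj b a) = G.Adj from flip_adj]
            exact hch2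
          · intro p hp q hq
            simp only [List.head?_cons, Option.mem_some_iff] at hq
            rw [List.getLast?_reverse] at hp
            simp only [List.head?_cons, Option.mem_some_iff] at hp
            subst hp; subst hq
            exact hyy.symm
        · intro p hp q hq
          rw [hLl, Option.mem_some_iff] at hp
          rw [List.head?_append, List.head?_reverse] at hq
          rw [List.getLast?_eq_getLast_of_ne_nil (l := y2 :: Q) (by simp), hQx1] at hq
          simp only [Option.some_or, Option.mem_some_iff] at hq
          subst hp; subst hq
          exact hadj1.symm
      · intro p hp q hq
        rw [List.getLast?_eq_getLast_of_ne_nil (l := y1 :: P) (by simp), hPx2,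
          Option.mem_some_iff] at hp
        rw [List.head?_append, hLh] at hq
        simp only [Option.some_or, Option.mem_some_iff] at hq
        subst hp; subst hq
        exact hadj2
  have hle := hmax M hMcyc
  rw [hMlen, List.length_rotate] at hle
  have : 0 < L.length := List.length_pos_iff.2 hLne
  omega

end Surgery


end MYhelpers

open List in
/-- McDiarmid–Yolov 2017: a graph on at least 3 vertices with `δ(G) ≥ α̃(G)` is hamiltonian. -/
theorem stmt_1 {V : Type*} [Fintype V] [DecidableEq V] (G : SimpleGraph V) [DecidableRel G.Adj]
    (hcard : 3 ≤ Fintype.card V) (hdeg : bipIndepNum G ≤ G.minDegree) :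
    G.IsHamiltonian := by
  classical
  have hVne : Nonempty V := Fintype.card_pos_iff.1 (by omega)
  set B : Set ℕ := {q : ℕ | ∃ s t : ℕ, 0 < s ∧ 0 < t ∧ s + t = q + 1 ∧
    ∀ A B : Finset V, Disjoint A B → A.card = s → B.card = t →
      ∃ a ∈ A, ∃ b ∈ B, G.Adj a b} with hBdef
  have hBne : B.Nonempty := by
    refine ⟨Fintype.card V, Fintype.card V, 1, by omega, one_pos, rfl, ?_⟩
    intro A B hdisj hA hB
    exfalso
    have hAuniv : A = Finset.univ := Finset.eq_univ_of_card A hA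
    obtain ⟨b, hb⟩ := Finset.card_pos.1 (by omega : 0 < B.card)
    exact (Finset.disjoint_left.1 hdisj) (hAuniv ▸ Finset.mem_univ b) hb
  have hq : bipIndepNum G ∈ B := Nat.sInf_mem hBne
  obtain ⟨s, t, hs, ht, hsum, hP⟩ := hq
  have hqd : s + t ≤ G.minDegree + 1 := by
    rw [hsum]; omega
  -- minimum degree at least 2
  have hδ2 : 2 ≤ G.minDegree := by
    rcases Nat.lt_or_ge (s + t) 3 with h3 | h3
    · -- s = t = 1 : G is complete
      have hs1 : s = 1 := by omega
      have ht1 : t = 1 := by omega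
      have hcomp : ∀ a b : V, a ≠ b → G.Adj a b := by
        intro a b hab
        obtain ⟨x, hx, y, hy, hxy⟩ := hP {a} {b}
          (by simp only [Finset.disjoint_singleton]; exact hab) (by simp [hs1]) (by simp [ht1])
        simp only [Finset.mem_singleton] at hx hy
        subst hx; subst hy; exact hxy
      refine G.le_minDegree_of_forall_le_degree 2 ?_
      intro w
      have h2 : 1 < (Finset.univ.erase w).card := by
        rw [Finset.card_erase_of_mem (Finset.mem_univ w), Finset.card_univ]
        omega
      obtain ⟨a, ha, b, hb, hab⟩ := Finset.one_lt_card.1 h2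
      have hsub : {a, b} ⊆ G.neighborFinset w := by
        intro z hz
        rcases Finset.mem_insert.1 hz with rfl | hz
        · exact (mem_neighborFinset _ _ _).2 (hcomp w z (Finset.ne_of_mem_erase ha).symm)
        · rw [Finset.mem_singleton] at hz
          subst hz
          exact (mem_neighborFinset _ _ _).2 (hcomp w z (Finset.ne_of_mem_erase hb).symm)
      calc 2 = ({a, b} : Finset V).card := by rw [Finset.card_insert_of_notMem (by simpa using hab), Finset.card_singleton]
        _ ≤ (G.neighborFinset w).card := Finset.card_le_card hsub
        _ = G.degree w := G.card_neighborFinset_eq_degree w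
    · omega
  -- longest cycle
  obtain ⟨l0, hl0, hl0len⟩ := exists_cyc_of_minDegree G hVne hδ2
  set S : Set ℕ := {k | ∃ l : List V, MYCyc G l ∧ l.length = k} with hSdef
  have hSne : S.Nonempty := ⟨l0.length, l0, hl0, rfl⟩
  have hSbdd : BddAbove S := by
    refine ⟨Fintype.card V, ?_⟩
    rintro k ⟨l, hl, rfl⟩
    exact hl.2.1.length_le_card
  obtain ⟨C, hC, hClen⟩ := Nat.sSup_mem hSne hSbdd
  have hmax : ∀ l : List V, MYCyc G l → l.length ≤ C.length := by
    intro l hl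
    rw [hClen]
    exact le_csSup hSbdd ⟨l, hl, rfl⟩
  have hCδ : G.minDegree + 1 ≤ C.length := le_trans hl0len (hmax l0 hl0)
  by_cases hall : ∀ w : V, w ∈ C
  · exact hC.isHamiltonian hall
  push_neg at hall
  obtain ⟨v, hv⟩ := hall
  exfalso
  have hvF : v ∉ C.toFinset := by simpa using hv
  set HS := HSet G C.toFinset v with hHSdef
  set HF : Finset V := (Set.toFinite HS).toFinset with hHFdef
  have hHFiff : ∀ u, u ∈ HF ↔ u ∈ HS := fun u => Set.Finite.mem_toFinset _
  have hvHF : v ∈ HF := (hHFiff v).2 (HSet.v_mem hvF)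
  have hHC : ∀ u ∈ HF, u ∉ C.toFinset := fun u hu => HSet.not_mem_F ((hHFiff u).1 hu)
  set NF : Finset V := Finset.univ.filter (fun w => w ∉ HF ∧ ∃ h ∈ HF, G.Adj h w) with hNFdef
  have hNFiff : ∀ w, w ∈ NF ↔ w ∉ HF ∧ ∃ h ∈ HF, G.Adj h w := by
    intro w; rw [hNFdef, Finset.mem_filter]; simp
  have hNC : ∀ w ∈ NF, w ∈ C := by
    intro w hw
    obtain ⟨hw1, h, hh, hadj⟩ := (hNFiff w).1 hw
    by_contra hwC
    exact hw1 ((hHFiff w).2 (HSet.ext ((hHFiff h).1 hh) hadj (by simpa using hwC)))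
  have hHNdisj : Disjoint HF NF := by
    rw [Finset.disjoint_right]
    intro w hw
    exact ((hNFiff w).1 hw).1
  -- no edges from HF to outside HF ∪ NF
  have hHout : ∀ a ∈ HF, ∀ b : V, b ∉ HF → b ∉ NF → ¬ G.Adj a b := by
    intro a ha b hb1 hb2 hadj
    exact hb2 ((hNFiff b).2 ⟨hb1, a, ha, hadj⟩)
  -- degree count : δ + 1 ≤ |HF| + |NF|
  have hdegcount : G.minDegree + 1 ≤ HF.card + NF.card := by
    have hsub : G.neighborFinset v ⊆ (HF.erase v) ∪ NF := by
      intro w hw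
      rw [mem_neighborFinset] at hw
      by_cases hwH : w ∈ HF
      · exact Finset.mem_union_left _ (Finset.mem_erase.2 ⟨(G.ne_of_adj hw).symm, hwH⟩)
      · by_cases hwN : w ∈ NF
        · exact Finset.mem_union_right _ hwN
        · exact absurd hw (hHout v hvHF w hwH hwN)
    have h1 := Finset.card_le_card hsub
    have h2 : ((HF.erase v) ∪ NF).card ≤ (HF.erase v).card + NF.card :=
      Finset.card_union_le _ _
    rw [Finset.card_erase_of_mem hvHF] at h2
    have h3 := G.minDegree_le_degree v
    rw [← G.card_neighborFinset_eq_degree v] at h3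
    have h4 : 1 ≤ HF.card := Finset.card_pos.2 ⟨v, hvHF⟩
    omega
  -- Y : the successors of NF on the cycle
  set Y : Finset V := NF.image (nxt C) with hYdef
  have hYcard : Y.card = NF.card := by
    rw [hYdef]
    refine Finset.card_image_of_injOn ?_
    intro a ha b hb hab
    exact hC.nxt_inj (hNC a ha) (hNC b hb) hab
  have hYC : ∀ y ∈ Y, y ∈ C := by
    intro y hy
    obtain ⟨x, hx, rfl⟩ := Finset.mem_image.1 hy
    exact hC.nxt_mem x (hNC x hx)
  have hYH : ∀ y ∈ Y, y ∉ HF := by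
    intro y hy hyH
    exact hHC y hyH (List.mem_toFinset.2 (hYC y hy))
  -- no edges between Y and HF
  have hYHedge : ∀ y ∈ Y, ∀ h ∈ HF, ¬ G.Adj y h := by
    intro y hy h hh hadj
    obtain ⟨x, hx, rfl⟩ := Finset.mem_image.1 hy
    obtain ⟨-, h1, hh1, hadj1⟩ := (hNFiff x).1 hx
    exact surgeryA hC hmax (hNC x hx) ((hHFiff h1).1 hh1) ((hHFiff h).1 hh)
      hadj1.symm hadj
  -- Y is independent
  have hYind : ∀ y1 ∈ Y, ∀ y2 ∈ Y, ¬ G.Adj y1 y2 := by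
    intro y1 hy1 y2 hy2 hadj
    obtain ⟨x1, hx1, rfl⟩ := Finset.mem_image.1 hy1
    obtain ⟨x2, hx2, rfl⟩ := Finset.mem_image.1 hy2
    obtain ⟨-, h1, hh1, hadj1⟩ := (hNFiff x1).1 hx1
    obtain ⟨-, h2, hh2, hadj2⟩ := (hNFiff x2).1 hx2
    have hxne : x1 ≠ x2 := by
      rintro rfl
      exact G.loopless.irrefl _ hadj
    exact surgeryB hC hmax (hNC x1 hx1) (hNC x2 hx2) hxne
      ((hHFiff h1).1 hh1) ((hHFiff h2).1 hh2) hadj1.symm hadj2.symm hadj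
  -- size relations
  have hHYbig : s + t ≤ HF.card + Y.card := by rw [hYcard]; omega
  have hYHdisjF : Disjoint Y HF := by
    rw [Finset.disjoint_left]; exact hYH
  rcases le_or_gt s Y.card with hsY | hsY
  · -- A ⊆ Y of size s, B ⊆ (Y \ A) ∪ HF of size t
    obtain ⟨A, hAsub, hAcard⟩ := Finset.exists_subset_card_eq hsY
    have hBcard : t ≤ ((Y \ A) ∪ HF).card := by
      rw [Finset.card_union_of_disjoint (Finset.disjoint_of_subset_left
        (Finset.sdiff_subset) hYHdisjF), Finset.card_sdiff_of_subset hAsub, hAcard]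
      omega
    obtain ⟨Bf, hBsub, hBcardeq⟩ := Finset.exists_subset_card_eq hBcard
    have hdisj : Disjoint A Bf := by
      rw [Finset.disjoint_left]
      intro a haA haB
      rcases Finset.mem_union.1 (hBsub haB) with h | h
      · exact (Finset.mem_sdiff.1 h).2 haA
      · exact (Finset.disjoint_left.1 hYHdisjF) (hAsub haA) h
    obtain ⟨a, haA, b, hbB, hab⟩ := hP A Bf hdisj hAcard hBcardeq
    rcases Finset.mem_union.1 (hBsub hbB) with h | h
    · exact hYind a (hAsub haA) b (Finset.mem_sdiff.1 h).1 hab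
    · exact hYHedge a (hAsub haA) b h hab
  rcases le_or_gt t Y.card with htY | htY
  · -- B ⊆ Y of size t, A ⊆ (Y \ B) ∪ HF of size s
    obtain ⟨Bf, hBsub, hBcard⟩ := Finset.exists_subset_card_eq htY
    have hAcard : s ≤ ((Y \ Bf) ∪ HF).card := by
      rw [Finset.card_union_of_disjoint (Finset.disjoint_of_subset_left
        (Finset.sdiff_subset) hYHdisjF), Finset.card_sdiff_of_subset hBsub, hBcard]
      omega
    obtain ⟨A, hAsub, hAcardeq⟩ := Finset.exists_subset_card_eq hAcard
    have hdisj : Disjoint A Bf := by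
      rw [Finset.disjoint_left]
      intro a haA haB
      rcases Finset.mem_union.1 (hAsub haA) with h | h
      · exact (Finset.mem_sdiff.1 h).2 haB
      · exact (Finset.disjoint_left.1 hYHdisjF) (hBsub haB) h
    obtain ⟨a, haA, b, hbB, hab⟩ := hP A Bf hdisj hAcardeq hBcard
    rcases Finset.mem_union.1 (hAsub haA) with h | h
    · exact hYind a (Finset.mem_sdiff.1 h).1 b (hBsub hbB) hab
    · exact hYHedge b (hBsub hbB) a h hab.symm
  · -- |Y| < s and |Y| < t : A ⊆ HF, B outside HF ∪ NF
    have hNcard : NF.card < s ∧ NF.card < t := by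
      rw [← hYcard]; exact ⟨hsY, htY⟩
    have hAcard : s ≤ HF.card := by omega
    obtain ⟨A, hAsub, hAcardeq⟩ := Finset.exists_subset_card_eq hAcard
    have hWcard : t ≤ (Finset.univ \ (HF ∪ NF)).card := by
      rw [Finset.card_sdiff_of_subset (Finset.subset_univ _), Finset.card_univ,
        Finset.card_union_of_disjoint hHNdisj]
      -- card V ≥ HF.card + C.length  ≥ HF.card + δ + 1
      have hdisjHC : Disjoint HF C.toFinset := by
        rw [Finset.disjoint_left]; exact hHC
      have h5 : HF.card + C.toFinset.card ≤ Fintype.card V := by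
        rw [← Finset.card_union_of_disjoint hdisjHC]
        exact le_trans (Finset.card_le_card (Finset.subset_univ _)) (le_of_eq Finset.card_univ)
      have h6 : C.toFinset.card = C.length := by
        rw [List.toFinset_card_of_nodup hC.2.1]
      have h7 : NF.card ≤ C.toFinset.card := by
        refine Finset.card_le_card ?_
        intro w hw; exact List.mem_toFinset.2 (hNC w hw)
      omega
    obtain ⟨Bf, hBsub, hBcardeq⟩ := Finset.exists_subset_card_eq hWcard
    have hdisj : Disjoint A Bf := by
      rw [Finset.disjoint_left]
      intro a haA haB
      have := hBsub haB
      rw [Finset.mem_sdiff] at this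
      exact this.2 (Finset.mem_union_left _ (hAsub haA))
    obtain ⟨a, haA, b, hbB, hab⟩ := hP A Bf hdisj hAcardeq hBcardeq
    have hbW := Finset.mem_sdiff.1 (hBsub hbB)
    have hb1 : b ∉ HF := fun h => hbW.2 (Finset.mem_union_left _ h)
    have hb2 : b ∉ NF := fun h => hbW.2 (Finset.mem_union_right _ h)
    exact hHout a (hAsub haA) b hb1 hb2 hab
end

section
/- Let G be a finite simple graph on at least 3 vertices. If the minimum degree of G satisfies δ(G) ≥ α̃(G) + 1, where α̃(G) is the bipartite independence number of G, then G is hamiltonian-connected. -/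
open SimpleGraph

namespace ZBWL
open List


variable {V : Type*}

/-- A good list: a path from `u` to `v` recorded as its vertex list. -/
def GoodList (G : SimpleGraph V) (u v : V) (L : List V) : Prop :=
  L.Chain' G.Adj ∧ L.Nodup ∧ L.head? = some u ∧ L.getLast? = some v

lemma getLast?_append_of_ne_nil (l l' : List V) (h : l' ≠ []) :
    (l ++ l').getLast? = l'.getLast? := by
  rw [List.getLast?_append]
  cases h' : l'.getLast? with
  | none => exact absurd (List.getLast?_eq_none_iff.mp h') h
  | some a => rfl

lemma head?_append_cons (A : List V) (y : V) (l l' : List V) :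
    (A ++ y :: l).head? = (A ++ y :: l').head? := by
  simp [List.head?_append]

lemma getLast?_mid (A : List V) (y : V) (l : List V) :
    (A ++ y :: l).getLast? = (y :: l).getLast? :=
  getLast?_append_of_ne_nil _ _ (by simp)

lemma getLast?_cons_of_ne_nil (y : V) (l : List V) (h : l ≠ []) :
    (y :: l).getLast? = l.getLast? := by
  have : (y :: l).getLast? = ([y] ++ l).getLast? := by simp
  rw [this, getLast?_append_of_ne_nil _ _ h]

lemma indexOf_append_self [DecidableEq V] {y : V} {A : List V} (B : List V) (h : y ∉ A) :
    (A ++ y :: B).idxOf y = A.length := by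
  induction A with
  | nil => simp
  | cons a A ih =>
    have hya : y ≠ a := by rintro rfl; simp at h
    have h' : y ∉ A := fun hy => h (List.mem_cons_of_mem _ hy)
    simp only [List.cons_append, List.length_cons]
    rw [List.idxOf_cons_ne _ (fun he => hya he.symm), ih h']

/-- the successor of `y` in the list `L` -/
def nxt [DecidableEq V] (L : List V) (y : V) : V := L.getD (L.idxOf y + 1) y

lemma nxt_spec [DecidableEq V] {L A B : List V} {y c : V} (hnd : L.Nodup)
    (hL : L = A ++ y :: c :: B) : nxt L y = c := by
  subst hL
  have hyA : y ∉ A := by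
    intro hy
    have := List.nodup_append'.mp hnd
    exact this.2.2 hy (by simp)
  rw [nxt, indexOf_append_self _ hyA, List.getD_eq_getElem?_getD]
  rw [List.getElem?_append_right (by omega)]
  simp

lemma exists_decomp_of_ne_last {L : List V} {y v : V} (hy : y ∈ L)
    (hlast : L.getLast? = some v) (hne : y ≠ v) : ∃ A c B, L = A ++ y :: c :: B := by
  obtain ⟨A, B, rfl⟩ := List.append_of_mem hy
  cases B with
  | nil =>
    exfalso
    rw [List.getLast?_concat] at hlast
    exact hne (by injection hlast)
  | cons c B => exact ⟨A, c, B, rfl⟩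

lemma decomp_pair {L : List V} {y z : V} (hy : y ∈ L) (hz : z ∈ L) (hne : y ≠ z) :
    (∃ A M B, L = A ++ y :: (M ++ z :: B)) ∨ (∃ A M B, L = A ++ z :: (M ++ y :: B)) := by
  obtain ⟨A₁, B₁, rfl⟩ := List.append_of_mem hy
  rcases List.mem_append.mp hz with hzA | hzB
  · obtain ⟨A, M, rfl⟩ := List.append_of_mem hzA
    right
    exact ⟨A, M, B₁, by simp⟩
  · rcases List.mem_cons.mp hzB with h | h
    · exact absurd h.symm hne
    · obtain ⟨M, B, rfl⟩ := List.append_of_mem h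
      left
      exact ⟨A₁, M, B, rfl⟩



lemma perm_nodup_aux [DecidableEq V] {L R L' : List V}
    (hperm : L' ~ L ++ R)
    (hndL : L.Nodup) (hndR : R.Nodup) (hdisj : ∀ x ∈ R, x ∉ L) :
    L'.Nodup ∧ L'.length = L.length + R.length := by
  constructor
  · exact hperm.nodup_iff.mpr
      (List.nodup_append'.mpr ⟨hndL, hndR, fun a ha hb => hdisj a hb ha⟩)
  · rw [hperm.length_eq, List.length_append]

lemma surgeryA [DecidableEq V] {G : SimpleGraph V} {u v : V} {A B R : List V} {y c : V}
    (hL : GoodList G u v (A ++ y :: c :: B))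
    (hR : R.Chain' G.Adj) (hRnd : R.Nodup) (hRne : R ≠ [])
    (hdisj : ∀ x ∈ R, x ∉ A ++ y :: c :: B)
    (hya : G.Adj y (R.head hRne)) (hbc : G.Adj (R.getLast hRne) c) :
    ∃ L', GoodList G u v L' ∧ L'.length = (A ++ y :: c :: B).length + R.length := by
  obtain ⟨hch, hnd, hhd, hlast⟩ := hL
  have hperm : (A ++ y :: (R ++ c :: B)) ~ (A ++ y :: c :: B) ++ R := by
    rw [List.perm_iff_count]
    intro a
    simp only [List.count_append, List.count_cons]
    split_ifs <;> omega
  obtain ⟨hnd', hlen'⟩ := perm_nodup_aux hperm hnd hRnd hdisj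
  simp only [List.Chain', List.isChain_append] at hch
  refine ⟨A ++ y :: (R ++ c :: B), ⟨?_, hnd', ?_, ?_⟩, hlen'⟩
  · simp only [List.Chain', List.isChain_append]
    refine ⟨hch.1, ?_, by simpa using hch.2.2⟩
    rw [List.isChain_cons]
    constructor
    · intro w hw
      rw [List.head?_append, List.head?_eq_head hRne] at hw
      simp at hw
      subst hw
      exact hya
    · rw [List.isChain_append]
      refine ⟨hR, hch.2.1.tail, ?_⟩
      intro x hx w hw
      rw [List.getLast?_eq_getLast hRne] at hx
      simp at hx hw
      subst hx; subst hw
      exact hbc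
  · rw [head?_append_cons A y _ (c :: B)]
    exact hhd
  · rw [getLast?_mid A y (R ++ c :: B),
      getLast?_cons_of_ne_nil y _ (by simp),
      getLast?_append_of_ne_nil R (c :: B) (by simp)]
    rw [getLast?_mid A y (c :: B), getLast?_cons_of_ne_nil y _ (by simp)] at hlast
    exact hlast

lemma surgeryB [DecidableEq V] {G : SimpleGraph V} {u v : V} {A M B' R : List V} {y z d : V}
    (hL : GoodList G u v (A ++ y :: (M ++ z :: d :: B')))
    (hR : R.Chain' G.Adj) (hRnd : R.Nodup) (hRne : R ≠ [])
    (hdisj : ∀ x ∈ R, x ∉ A ++ y :: (M ++ z :: d :: B'))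
    (hya : G.Adj y (R.head hRne)) (hbz : G.Adj (R.getLast hRne) z)
    (hcd : ∀ x, (M ++ z :: d :: B').head? = some x → G.Adj x d) :
    ∃ L', GoodList G u v L' ∧
      L'.length = (A ++ y :: (M ++ z :: d :: B')).length + R.length := by
  obtain ⟨hch, hnd, hhd, hlast⟩ := hL
  have hperm : (A ++ y :: (R ++ z :: (M.reverse ++ d :: B'))) ~
      (A ++ y :: (M ++ z :: d :: B')) ++ R := by
    rw [List.perm_iff_count]
    intro a
    simp only [List.count_append, List.count_cons, List.count_reverse]
    split_ifs <;> omega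
  obtain ⟨hnd', hlen'⟩ := perm_nodup_aux hperm hnd hRnd hdisj
  simp only [List.Chain', List.isChain_append] at hch
  have c2 : (M ++ z :: d :: B').Chain' G.Adj := hch.2.1.tail
  simp only [List.Chain', List.isChain_append] at c2
  obtain ⟨cM, c3, jMz⟩ := c2
  have adj_zd : G.Adj z d := (List.isChain_cons_cons.mp c3).1
  have c4 : (d :: B').Chain' G.Adj := (List.isChain_cons_cons.mp c3).2
  refine ⟨A ++ y :: (R ++ z :: (M.reverse ++ d :: B')), ⟨?_, hnd', ?_, ?_⟩, hlen'⟩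
  · simp only [List.Chain', List.isChain_append]
    refine ⟨hch.1, ?_, by simpa using hch.2.2⟩
    rw [List.isChain_cons]
    constructor
    · intro w hw
      rw [List.head?_append, List.head?_eq_head hRne] at hw
      simp at hw
      subst hw
      exact hya
    · rw [List.isChain_append]
      refine ⟨hR, ?_, ?_⟩
      · rw [List.isChain_cons]
        constructor
        · intro w hw
          cases M with
          | nil =>
            simp at hw
            subst hw
            exact adj_zd
          | cons m M₁ =>
            rw [List.head?_append, List.head?_reverse] at hw
            have hMne : (m :: M₁ : List V) ≠ [] := by simp
            rw [List.getLast?_eq_getLast hMne] at hw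
            simp at hw
            subst hw
            exact (jMz _ (List.getLast?_eq_getLast hMne) z (by simp)).symm
        · rw [List.isChain_append]
          refine ⟨?_, c4, ?_⟩
          · rw [List.isChain_reverse]
            exact cM.imp (fun a b h => h.symm)
          · intro x hx w hw
            simp only [List.head?_cons, Option.mem_def, Option.some.injEq] at hw
            subst hw
            rw [List.getLast?_reverse] at hx
            cases M with
            | nil => simp at hx
            | cons m M₁ =>
              have hxm : m = x := by simpa using hx
              subst hxm
              exact hcd _ (by simp)
      · intro x hx w hw
        rw [List.getLast?_eq_getLast hRne] at hx
        simp at hx hw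
        subst hx; subst hw
        exact hbz
  · rw [head?_append_cons A y _ (M ++ z :: d :: B')]
    exact hhd
  · rw [getLast?_mid A y (R ++ z :: (M.reverse ++ d :: B')),
      getLast?_cons_of_ne_nil y _ (by simp),
      getLast?_append_of_ne_nil R _ (by simp),
      getLast?_cons_of_ne_nil z _ (by simp),
      getLast?_append_of_ne_nil M.reverse _ (by simp)]
    rw [getLast?_mid A y (M ++ z :: d :: B'),
      getLast?_cons_of_ne_nil y _ (by simp),
      getLast?_append_of_ne_nil M _ (by simp),
      getLast?_cons_of_ne_nil z _ (by simp)] at hlast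
    exact hlast

open SimpleGraph in
lemma exists_walk_of_chain {G : SimpleGraph V} :
    ∀ (L : List V), L.Chain' G.Adj → ∀ {u v : V}, L.head? = some u → L.getLast? = some v →
      ∃ p : G.Walk u v, p.support = L := by
  intro L
  induction L with
  | nil => intro _ u v h; simp at h
  | cons x L ih =>
    intro hch u v hh hl
    have hxu : x = u := by simpa using hh
    subst hxu
    cases L with
    | nil =>
      have hv : x = v := by simpa using hl
      subst hv
      exact ⟨Walk.nil, rfl⟩
    | cons y L' =>
      simp only [List.Chain', List.isChain_cons_cons] at hch
      rw [getLast?_cons_of_ne_nil x _ (by simp)] at hl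
      obtain ⟨q, hq⟩ := ih hch.2 rfl hl
      exact ⟨Walk.cons hch.1 q, by simp [hq]⟩

open SimpleGraph in
lemma goodlist_of_reachable [DecidableEq V] {G : SimpleGraph V} {a b : V}
    (h : G.Reachable a b) :
    ∃ R : List V, R.Chain' G.Adj ∧ R.Nodup ∧ R ≠ [] ∧ R.head? = some a ∧
      R.getLast? = some b ∧ ∀ x ∈ R, G.Reachable a x := by
  obtain ⟨q0⟩ := h
  let q : G.Path a b := q0.toPath
  refine ⟨(q : G.Walk a b).support, Walk.isChain_adj_support _, q.2.support_nodup,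
    Walk.support_ne_nil _, ?_, ?_, ?_⟩
  · rw [Walk.support_eq_cons]; rfl
  · rw [← List.head?_reverse, ← Walk.support_reverse, Walk.support_eq_cons]; rfl
  · intro x hx
    exact ⟨(q : G.Walk a b).takeUntil x hx⟩

open SimpleGraph in
lemma core {V : Type*} [Fintype V] [DecidableEq V] (G : SimpleGraph V) [DecidableRel G.Adj]
    (s t : ℕ) (hs : 0 < s) (ht : 0 < t) (hst : s + t = G.minDegree) (hsle : s ≤ t)
    (hprop : ∀ A B : Finset V, Disjoint A B → A.card = s → B.card = t →
      ∃ a ∈ A, ∃ b ∈ B, G.Adj a b) :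
    ∀ u v : V, u ≠ v → ∃ p : G.Walk u v, p.IsHamiltonian := by
  classical
  intro u v huv
  have hdeg : ∀ x : V, s + t ≤ (G.neighborFinset x).card := fun x => by
    rw [card_neighborFinset_eq_degree, hst]
    exact G.minDegree_le_degree x
  -- connectivity
  have hreach : G.Reachable u v := by
    by_contra hnr
    have hC : ∀ x : V, s + t ≤ (Finset.univ.filter (fun z => G.Reachable x z)).card := by
      intro x
      refine le_trans (hdeg x) (Finset.card_le_card ?_)
      intro z hz
      rw [mem_neighborFinset] at hz
      simp only [Finset.mem_filter, Finset.mem_univ, true_and]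
      exact hz.reachable
    set Cu := Finset.univ.filter (fun z => G.Reachable u z) with hCu
    set Cv := Finset.univ.filter (fun z => G.Reachable v z) with hCv
    have hdisj : Disjoint Cu Cv := by
      rw [Finset.disjoint_left]
      intro x hxu hxv
      simp only [hCu, hCv, Finset.mem_filter, Finset.mem_univ, true_and] at hxu hxv
      exact hnr (hxu.trans hxv.symm)
    obtain ⟨A, hAsub, hA⟩ :=
      Finset.exists_subset_card_eq (le_trans (Nat.le_add_right s t) (hC u))
    obtain ⟨B, hBsub, hB⟩ :=
      Finset.exists_subset_card_eq (le_trans (Nat.le_add_left t s) (hC v))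
    obtain ⟨a, ha, b, hb, hab⟩ := hprop A B (hdisj.mono hAsub hBsub) hA hB
    have hua : G.Reachable u a := by
      have := hAsub ha; simp only [hCu, Finset.mem_filter] at this; exact this.2
    have hvb : G.Reachable v b := by
      have := hBsub hb; simp only [hCv, Finset.mem_filter] at this; exact this.2
    exact hnr ((hua.trans hab.reachable).trans hvb.symm)
  -- a good list exists
  obtain ⟨L₀, hch₀, hnd₀, _, hh₀, hl₀, _⟩ := goodlist_of_reachable hreach
  have hL₀ : GoodList G u v L₀ := ⟨hch₀, hnd₀, hh₀, hl₀⟩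
  -- maximal good list
  have hbdd : ∀ n ∈ {n | ∃ L, GoodList G u v L ∧ L.length = n}, n ≤ Fintype.card V := by
    rintro n ⟨L, hL, rfl⟩
    exact hL.2.1.length_le_card
  obtain ⟨L, hL, hlmax⟩ : ∃ L, GoodList G u v L ∧
      ∀ L', GoodList G u v L' → L'.length ≤ L.length := by
    have hSne : Set.Nonempty {n | ∃ L, GoodList G u v L ∧ L.length = n} :=
      ⟨L₀.length, L₀, hL₀, rfl⟩
    obtain ⟨L, hL, hlen⟩ := Nat.sSup_mem hSne ⟨Fintype.card V, hbdd⟩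
    exact ⟨L, hL, fun L' hL' => hlen ▸ le_csSup ⟨Fintype.card V, hbdd⟩ ⟨L', hL', rfl⟩⟩
  obtain ⟨hch, hnd, hhd, hlastL⟩ := hL
  by_cases hall : ∀ x : V, x ∈ L
  · obtain ⟨p, hp⟩ := exists_walk_of_chain L hch hhd hlastL
    exact ⟨p, (Walk.IsPath.mk' (hp ▸ hnd)).isHamiltonian_of_mem (fun w => hp ▸ hall w)⟩
  push_neg at hall
  obtain ⟨w, hw⟩ := hall
  exfalso
  -- the component of w off L
  let G' : SimpleGraph V :=
    { Adj := fun x y => G.Adj x y ∧ x ∉ L ∧ y ∉ L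
      symm := ⟨fun x y h => ⟨h.1.symm, h.2.2, h.2.1⟩⟩
      loopless := ⟨fun x h => G.loopless.irrefl x h.1⟩ }
  let Hs : Set V := {x | G'.Reachable w x}
  have hwH : w ∈ Hs := Reachable.refl w
  have hkey : ∀ {a b : V}, G'.Walk a b → a ∉ L → b ∉ L := by
    intro a b p
    induction p with
    | nil => exact id
    | cons h q ih => exact fun _ => ih h.2.2
  have hHnotL : ∀ x ∈ Hs, x ∉ L := by
    intro x hx
    obtain ⟨p⟩ := hx
    exact hkey p hw
  have hclosed : ∀ x ∈ Hs, ∀ {b : V}, G.Adj x b → b ∉ L → b ∈ Hs := by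
    intro x hx b hadj hb
    exact Reachable.trans hx (SimpleGraph.Adj.reachable ⟨hadj, hHnotL x hx, hb⟩)
  have hpath : ∀ a ∈ Hs, ∀ b ∈ Hs, ∃ R : List V, R.Chain' G.Adj ∧ R.Nodup ∧ R ≠ [] ∧
      R.head? = some a ∧ R.getLast? = some b ∧ ∀ x ∈ R, x ∈ Hs := by
    intro a ha b hb
    obtain ⟨R, hRc, hRnd, hRne, hRh, hRl, hRmem⟩ :=
      goodlist_of_reachable (ha.symm.trans hb : G'.Reachable a b)
    exact ⟨R, hRc.imp (fun a b h => h.1), hRnd, hRne, hRh, hRl,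
      fun x hx => ha.trans (hRmem x hx)⟩
  -- finsets
  set HF : Finset V := Finset.univ.filter (· ∈ Hs) with hHF
  set NF : Finset V := Finset.univ.filter (fun y => y ∈ L ∧ y ≠ v ∧ ∃ h ∈ Hs, G.Adj y h)
    with hNF
  set PF : Finset V := NF.image (nxt L) with hPF
  set restF : Finset V := Finset.univ \ (HF ∪ NF ∪ {v}) with hrestF
  have hmemHF : ∀ x, x ∈ HF ↔ x ∈ Hs := by
    intro x; simp [hHF]
  have hmemNF : ∀ x, x ∈ NF ↔ x ∈ L ∧ x ≠ v ∧ ∃ h ∈ Hs, G.Adj x h := by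
    intro x; simp [hNF]
  -- decomposition for members of NF
  have hdecomp : ∀ y ∈ NF, ∃ A c B, L = A ++ y :: c :: B ∧ nxt L y = c := by
    intro y hy
    rw [hmemNF] at hy
    obtain ⟨A, c, B, hdec⟩ := exists_decomp_of_ne_last hy.1 hlastL hy.2.1
    exact ⟨A, c, B, hdec, nxt_spec hnd hdec⟩
  have hnxtL : ∀ y ∈ NF, nxt L y ∈ L := by
    intro y hy
    obtain ⟨A, c, B, hdec, hc⟩ := hdecomp y hy
    rw [hc, hdec]
    simp
  -- E1: no edge from a successor to the component
  have E1 : ∀ y ∈ NF, ∀ h ∈ Hs, ¬ G.Adj (nxt L y) h := by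
    intro y hy h hh hadj
    obtain ⟨A, c, B, hdec, hc⟩ := hdecomp y hy
    rw [hc] at hadj
    obtain ⟨a, haH, hya⟩ := ((hmemNF y).mp hy).2.2
    obtain ⟨R, hRc, hRnd, hRne, hRh, hRl, hRmem⟩ := hpath a haH h hh
    have hRhead : R.head hRne = a := by
      rw [List.head?_eq_head hRne] at hRh
      exact Option.some_injective _ hRh
    have hRlast : R.getLast hRne = h := by
      rw [List.getLast?_eq_getLast hRne] at hRl
      exact Option.some_injective _ hRl
    obtain ⟨L', hgood, hlen⟩ := surgeryA (G := G) (u := u) (v := v)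
      (A := A) (B := B) (R := R) (y := y) (c := c)
      (hdec ▸ (⟨hch, hnd, hhd, hlastL⟩ : GoodList G u v L))
      hRc hRnd hRne (fun x hx => hdec ▸ hHnotL x (hRmem x hx))
      (by rw [hRhead]; exact hya) (by rw [hRlast]; exact hadj.symm)
    have hcontra := hlmax L' hgood
    rw [hlen, ← hdec] at hcontra
    have : R.length = 0 := by omega
    exact hRne (List.length_eq_zero_iff.mp this)
  -- E2: no edge between successors
  have E2 : ∀ y ∈ NF, ∀ z ∈ NF, y ≠ z → ¬ G.Adj (nxt L y) (nxt L z) := by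
    have Hord : ∀ y ∈ NF, ∀ z ∈ NF, (∃ A M B, L = A ++ y :: (M ++ z :: B)) →
        ¬ G.Adj (nxt L y) (nxt L z) := by
      rintro y hy z hz ⟨A, M, B, hdec⟩ hadj
      have hz' := (hmemNF z).mp hz
      have hy' := (hmemNF y).mp hy
      have hBne : B ≠ [] := by
        rintro rfl
        apply hz'.2.1
        have hlast2 := hlastL
        rw [hdec, getLast?_mid, getLast?_cons_of_ne_nil y _ (by simp),
          getLast?_append_of_ne_nil M _ (by simp)] at hlast2
        simpa using hlast2
      obtain ⟨d, B', rfl⟩ := List.exists_cons_of_ne_nil hBne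
      have hdec2 : L = (A ++ y :: M) ++ z :: d :: B' := by
        rw [hdec]; simp
      have hnz : nxt L z = d := nxt_spec hnd hdec2
      obtain ⟨a, haH, hya⟩ := hy'.2.2
      obtain ⟨b, hbH, hzb⟩ := hz'.2.2
      obtain ⟨R, hRc, hRnd, hRne, hRh, hRl, hRmem⟩ := hpath a haH b hbH
      have hRhead : R.head hRne = a := by
        rw [List.head?_eq_head hRne] at hRh
        exact Option.some_injective _ hRh
      have hRlast : R.getLast hRne = b := by
        rw [List.getLast?_eq_getLast hRne] at hRl
        exact Option.some_injective _ hRl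
      have hny : ∀ x, (M ++ z :: d :: B').head? = some x → nxt L y = x := by
        intro x hx
        cases M with
        | nil =>
          have hxz : z = x := by simpa using hx
          subst hxz
          exact nxt_spec (A := A) (c := z) (B := d :: B') hnd (by rw [hdec]; simp)
        | cons m M₁ =>
          have hxm : m = x := by simpa using hx
          subst hxm
          exact nxt_spec (A := A) (c := m) (B := M₁ ++ z :: d :: B') hnd
            (by rw [hdec]; simp)
      obtain ⟨L', hgood, hlen⟩ := surgeryB (G := G) (u := u) (v := v)
        (A := A) (M := M) (B' := B') (R := R) (y := y) (z := z) (d := d)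
        (hdec ▸ (⟨hch, hnd, hhd, hlastL⟩ : GoodList G u v L))
        hRc hRnd hRne (fun x hx => hdec ▸ hHnotL x (hRmem x hx))
        (by rw [hRhead]; exact hya) (by rw [hRlast]; exact hzb.symm)
        (by
          intro x hx
          rw [← hny x hx, ← hnz]
          exact hadj)
      have hcontra := hlmax L' hgood
      rw [hlen, ← hdec] at hcontra
      have : R.length = 0 := by omega
      exact hRne (List.length_eq_zero_iff.mp this)
    intro y hy z hz hne hadj
    have hyL := ((hmemNF y).mp hy).1
    have hzL := ((hmemNF z).mp hz).1
    rcases decomp_pair hyL hzL hne with h | h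
    · exact Hord y hy z hz h hadj
    · exact Hord z hz y hy h hadj.symm
  -- basic finset facts
  have hPFHF : ∀ x ∈ PF, x ∉ HF := by
    intro x hx hxH
    rw [hPF, Finset.mem_image] at hx
    obtain ⟨y, hy, rfl⟩ := hx
    exact hHnotL _ ((hmemHF _).mp hxH) (hnxtL y hy)
  have hwHF : w ∈ HF := (hmemHF w).mpr hwH
  have hcount1 : s + t ≤ HF.card + NF.card := by
    have hsub : G.neighborFinset w ⊆ (HF.erase w) ∪ (NF ∪ {v}) := by
      intro x hx
      rw [mem_neighborFinset] at hx
      by_cases hxL : x ∈ L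
      · by_cases hxv : x = v
        · subst hxv; simp
        · have : x ∈ NF := (hmemNF x).mpr ⟨hxL, hxv, w, hwH, hx.symm⟩
          simp [this]
      · have hxH : x ∈ Hs := hclosed w hwH hx hxL
        have hxw : x ≠ w := fun he => G.loopless.irrefl w (he ▸ hx)
        simp [Finset.mem_erase, hxw, (hmemHF x).mpr hxH]
    have hle := le_trans (hdeg w) (Finset.card_le_card hsub)
    have h1 := Finset.card_union_le (HF.erase w) (NF ∪ {v})
    have h2 := Finset.card_union_le NF ({v} : Finset V)
    have h3 : (HF.erase w).card = HF.card - 1 := Finset.card_erase_of_mem hwHF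
    have h4 : 1 ≤ HF.card := Finset.card_pos.mpr ⟨w, hwHF⟩
    have h5 : ({v} : Finset V).card = 1 := Finset.card_singleton v
    omega
  have hinj : Set.InjOn (nxt L) NF := by
    have key : ∀ y' ∈ NF, ∀ z' ∈ NF, (∃ A M B, L = A ++ y' :: (M ++ z' :: B)) →
        nxt L y' ≠ nxt L z' := by
      rintro y' hy' z' hz' ⟨A, M, B, hdec⟩
      have hz'' := (hmemNF z').mp hz'
      have hBne : B ≠ [] := by
        rintro rfl
        apply hz''.2.1
        have hlast2 := hlastL
        rw [hdec, getLast?_mid, getLast?_cons_of_ne_nil y' _ (by simp),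
          getLast?_append_of_ne_nil M _ (by simp)] at hlast2
        simpa using hlast2
      obtain ⟨d, B', rfl⟩ := List.exists_cons_of_ne_nil hBne
      have hnz : nxt L z' = d := nxt_spec (A := A ++ y' :: M) (c := d) (B := B') hnd (by rw [hdec]; simp)
      have hnd2 : (y' :: (M ++ z' :: d :: B')).Nodup := by
        have hnd3 := hnd
        rw [hdec, List.nodup_append] at hnd3
        exact hnd3.2.1
      cases M with
      | nil =>
        have hny : nxt L y' = z' := nxt_spec (A := A) (c := z') (B := d :: B') hnd
          (by rw [hdec]; simp)
        rw [hny, hnz]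
        intro hzd
        have h2 : (z' :: d :: B').Nodup := by simpa using hnd2.of_cons
        exact (List.nodup_cons.mp h2).1 (hzd ▸ List.mem_cons_self)
      | cons m M₁ =>
        have hny : nxt L y' = m := nxt_spec (A := A) (c := m) (B := M₁ ++ z' :: d :: B')
          hnd (by rw [hdec]; simp)
        rw [hny, hnz]
        intro hmd
        have h2 : (m :: (M₁ ++ z' :: d :: B')).Nodup := by simpa using hnd2.of_cons
        apply (List.nodup_cons.mp h2).1
        rw [hmd]
        exact List.mem_append_right _ (List.mem_cons_of_mem z' (List.mem_cons_self))
    intro y hy z hz heq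
    by_contra hne
    rcases decomp_pair ((hmemNF y).mp (Finset.mem_coe.mp hy)).1
      ((hmemNF z).mp (Finset.mem_coe.mp hz)).1 hne with h | h
    · exact key y (Finset.mem_coe.mp hy) z (Finset.mem_coe.mp hz) h heq
    · exact key z (Finset.mem_coe.mp hz) y (Finset.mem_coe.mp hy) h heq.symm
  have hPFcard : PF.card = NF.card := by
    rw [hPF]
    exact Finset.card_image_of_injOn hinj
  have hpart : ∀ x : V, x ∉ HF → x ∉ NF → x ≠ v → x ∈ restF := by
    intro x h1 h2 h3
    simp [hrestF, Finset.mem_sdiff, h1, h2, h3]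
  have hrestHF : ∀ x ∈ restF, x ∉ HF := by
    intro x hx
    rw [hrestF, Finset.mem_sdiff] at hx
    intro hxH
    exact hx.2 (by simp [hxH])
  have F3 : ∀ a ∈ restF, ∀ b ∈ Hs, ¬ G.Adj a b := by
    intro a ha b hb hadj
    have ha' : a ∉ HF ∧ a ∉ NF ∧ a ≠ v := by
      rw [hrestF, Finset.mem_sdiff] at ha
      refine ⟨fun h => ha.2 (by simp [h]), fun h => ha.2 (by simp [h]),
        fun h => ha.2 (by simp [h])⟩
    by_cases haL : a ∈ L
    · exact ha'.2.1 ((hmemNF a).mpr ⟨haL, ha'.2.2, b, hb, hadj⟩)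
    · exact ha'.1 ((hmemHF a).mpr (hclosed b hb hadj.symm haL))
  -- main case analysis
  by_cases hHt : HF.card ≤ t
  · obtain ⟨extra, hesub, hecard⟩ := Finset.exists_subset_card_eq
      (show t - HF.card ≤ PF.card by omega)
    obtain ⟨A, hAsub, hAcard⟩ := Finset.exists_subset_card_eq
      (show s ≤ (PF \ extra).card by
        rw [Finset.card_sdiff_of_subset hesub]; omega)
    have hdisjHE : Disjoint HF extra := by
      rw [Finset.disjoint_left]
      intro x hxH hxE
      exact hPFHF x (hesub hxE) hxH
    have hBcard : (HF ∪ extra).card = t := by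
      rw [Finset.card_union_of_disjoint hdisjHE, hecard]; omega
    have hdisjAB : Disjoint A (HF ∪ extra) := by
      rw [Finset.disjoint_left]
      intro x hxA hxB
      have hxP := hAsub hxA
      rw [Finset.mem_sdiff] at hxP
      rcases Finset.mem_union.mp hxB with h | h
      · exact hPFHF x hxP.1 h
      · exact hxP.2 h
    obtain ⟨a, ha, b, hb, hab⟩ := hprop A (HF ∪ extra) hdisjAB hAcard hBcard
    have haP : a ∈ PF := (Finset.mem_sdiff.mp (hAsub ha)).1
    rw [hPF] at haP
    obtain ⟨ya, hya, hya2⟩ := Finset.mem_image.mp haP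
    rcases Finset.mem_union.mp hb with hbH | hbE
    · exact E1 ya hya b ((hmemHF b).mp hbH) (hya2 ▸ hab)
    · have hbP := hesub hbE
      rw [hPF] at hbP
      obtain ⟨yb, hyb, hyb2⟩ := Finset.mem_image.mp hbP
      have hne : ya ≠ yb := by
        rintro rfl
        rw [hya2] at hyb2
        exact Finset.disjoint_left.mp hdisjAB ha (hyb2 ▸ hb)
      apply E2 ya hya yb hyb hne
      rw [hya2, hyb2]
      exact hab
  · push_neg at hHt
    obtain ⟨B, hBsub, hBcard⟩ := Finset.exists_subset_card_eq hHt.le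
    by_cases hPs : s ≤ PF.card
    · obtain ⟨A, hAsub, hAcard⟩ := Finset.exists_subset_card_eq hPs
      have hdisjAB : Disjoint A B := by
        rw [Finset.disjoint_left]
        intro x hxA hxB
        exact hPFHF x (hAsub hxA) (hBsub hxB)
      obtain ⟨a, ha, b, hb, hab⟩ := hprop A B hdisjAB hAcard hBcard
      have haP := hAsub ha
      rw [hPF] at haP
      obtain ⟨ya, hya, hya2⟩ := Finset.mem_image.mp haP
      exact E1 ya hya b ((hmemHF b).mp (hBsub hb)) (hya2 ▸ hab)
    by_cases hrs : s ≤ restF.card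
    · obtain ⟨A, hAsub, hAcard⟩ := Finset.exists_subset_card_eq hrs
      have hdisjAB : Disjoint A B := by
        rw [Finset.disjoint_left]
        intro x hxA hxB
        exact hrestHF x (hAsub hxA) (hBsub hxB)
      obtain ⟨a, ha, b, hb, hab⟩ := hprop A B hdisjAB hAcard hBcard
      exact F3 a (hAsub ha) b ((hmemHF b).mp (hBsub hb)) hab
    push_neg at hPs hrs
    rcases Finset.eq_empty_or_nonempty NF with hNFe | hNFne
    · have huL : u ∈ L := by
        cases L with
        | nil => simp at hhd
        | cons a l =>
          have : a = u := by simpa using hhd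
          subst this
          exact List.mem_cons_self
      have huHF : u ∉ HF := fun h => hHnotL u ((hmemHF u).mp h) huL
      have huNF : u ∉ NF := by rw [hNFe]; simp
      have hurest : u ∈ restF := hpart u huHF huNF huv
      have hsub : G.neighborFinset u ⊆ (restF ∪ {v}).erase u := by
        intro x hx
        rw [mem_neighborFinset] at hx
        have hxu : x ≠ u := fun he => G.loopless.irrefl u (he ▸ hx)
        have hxHF : x ∉ HF := by
          intro hxH
          have : u ∈ NF := (hmemNF u).mpr ⟨huL, huv, x, (hmemHF x).mp hxH, hx⟩
          rw [hNFe] at this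
          simp at this
        have hxNF : x ∉ NF := by rw [hNFe]; simp
        rw [Finset.mem_erase]
        refine ⟨hxu, ?_⟩
        by_cases hxv : x = v
        · simp [hxv]
        · simp [hpart x hxHF hxNF hxv]
      have hcdeg := le_trans (hdeg u) (Finset.card_le_card hsub)
      have hce := Finset.card_erase_of_mem (Finset.mem_union_left ({v} : Finset V) hurest)
      have h6 := Finset.card_union_le restF ({v} : Finset V)
      have h7 : ({v} : Finset V).card = 1 := Finset.card_singleton v
      omega
    · obtain ⟨y, hy⟩ := hNFne
      have hcP : nxt L y ∈ PF := by
        rw [hPF]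
        exact Finset.mem_image.mpr ⟨y, hy, rfl⟩
      have hcHF : nxt L y ∉ HF := hPFHF _ hcP
      have hsub : G.neighborFinset (nxt L y) ⊆ ((NF ∪ {v}) ∪ restF).erase (nxt L y) := by
        intro x hx
        rw [mem_neighborFinset] at hx
        have hxc : x ≠ nxt L y := fun he => G.loopless.irrefl _ (he ▸ hx)
        have hxHF : x ∉ HF := fun hxH => E1 y hy x ((hmemHF x).mp hxH) hx
        rw [Finset.mem_erase]
        refine ⟨hxc, ?_⟩
        by_cases hxNF : x ∈ NF
        · simp [hxNF]
        by_cases hxv : x = v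
        · simp [hxv]
        · simp [hpart x hxHF hxNF hxv]
      have hcmem : nxt L y ∈ (NF ∪ {v}) ∪ restF := by
        by_cases hcNF : nxt L y ∈ NF
        · simp [hcNF]
        by_cases hcv : nxt L y = v
        · simp [hcv]
        · simp [hpart _ hcHF hcNF hcv]
      have hccard := Finset.card_erase_of_mem hcmem
      have h7 := Finset.card_union_le (NF ∪ {v}) restF
      have h8 := Finset.card_union_le NF ({v} : Finset V)
      have h9 : ({v} : Finset V).card = 1 := Finset.card_singleton v
      have hcdeg := le_trans (hdeg (nxt L y)) (Finset.card_le_card hsub)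
      omega


end ZBWL

/-- Zhou–Broersma–Wang–Lu 2024: a graph on at least 3 vertices with `δ(G) ≥ α̃(G) + 1` is
hamiltonian-connected. -/

theorem stmt_2 {V : Type*} [Fintype V] [DecidableEq V] (G : SimpleGraph V) [DecidableRel G.Adj]
    (hcard : 3 ≤ Fintype.card V) (hdeg : bipIndepNum G + 1 ≤ G.minDegree) :
    HamiltonianConnected G := by
  classical
  set Q : Set ℕ := {q : ℕ | ∃ s t : ℕ, 0 < s ∧ 0 < t ∧ s + t = q + 1 ∧
    ∀ A B : Finset V, Disjoint A B → A.card = s → B.card = t →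
      ∃ a ∈ A, ∃ b ∈ B, G.Adj a b} with hQ
  have hb : bipIndepNum G = sInf Q := by rw [hQ, bipIndepNum]
  have hmemQ : Fintype.card V ∈ Q := by
    refine ⟨1, Fintype.card V, one_pos, by omega, by omega, ?_⟩
    intro A B hdisj hA hB
    exfalso
    have hcu := Finset.card_union_of_disjoint hdisj
    have hle := Finset.card_le_univ (A ∪ B)
    rw [hcu, hA, hB] at hle
    omega
  have hup : ∀ q ∈ Q, q + 1 ∈ Q := by
    rintro q ⟨s, t, hs, ht, hst, hprop⟩
    refine ⟨s + 1, t, by omega, ht, by omega, ?_⟩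
    intro A B hdisj hA hB
    obtain ⟨a, ha⟩ : A.Nonempty := Finset.card_pos.mp (by omega)
    obtain ⟨x, hx, y, hy, hxy⟩ := hprop (A.erase a) B
      (Finset.disjoint_of_subset_left (Finset.erase_subset a A) hdisj)
      (by rw [Finset.card_erase_of_mem ha, hA]; omega) hB
    exact ⟨x, Finset.mem_of_mem_erase hx, y, hy, hxy⟩
  have hupk : ∀ k q, q ∈ Q → q + k ∈ Q := by
    intro k
    induction k with
    | zero => exact fun q h => h
    | succ n ih =>
      intro q h
      exact hup _ (ih q h)
  have hInf : sInf Q ∈ Q := Nat.sInf_mem ⟨_, hmemQ⟩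
  have hmem2 : G.minDegree - 1 ∈ Q := by
    have h1 : sInf Q ≤ G.minDegree - 1 := by omega
    have h2 := hupk (G.minDegree - 1 - sInf Q) (sInf Q) hInf
    rwa [show sInf Q + (G.minDegree - 1 - sInf Q) = G.minDegree - 1 by omega] at h2
  obtain ⟨s, t, hs, ht, hst, hprop⟩ := hmem2
  have hst' : s + t = G.minDegree := by omega
  intro u v huv
  rcases le_total s t with hsle | htle
  · exact ZBWL.core G s t hs ht hst' hsle hprop u v huv
  · refine ZBWL.core G t s ht hs (by omega) htle ?_ u v huv
    intro A B hdisj hA hB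
    obtain ⟨b, hb', a, ha, hba⟩ := hprop B A hdisj.symm hB hA
    exact ⟨a, ha, b, hb', hba.symm⟩
end

section
/- Let G be a finite simple graph such that max{d_G(x), d_G(y)} ≥ α̃(G) + 1 for every pair of nonadjacent vertices x, y with d_G(x, y) = 2, where α̃(G) is the bipartite independence number of G. Let V* = {v ∈ V(G) : d_G(v) ≥ α̃(G) + 1}. Then every connected component of the induced subgraph G − V* is a clique (a complete induced subgraph). -/
open SimpleGraph

/-- Under the Fan-type condition, every connected component of `G - V*` is a clique, where
`V* = {v : d(v) ≥ α̃(G) + 1}`. -/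
theorem stmt_14 {V : Type*} [Fintype V] (G : SimpleGraph V) [DecidableRel G.Adj]
    (hdeg : ∀ x y : V, ¬ G.Adj x y → G.dist x y = 2 →
      bipIndepNum G + 1 ≤ max (G.degree x) (G.degree y)) :
    ∀ x y : ↥({v : V | bipIndepNum G + 1 ≤ G.degree v}ᶜ),
      (G.induce ({v : V | bipIndepNum G + 1 ≤ G.degree v}ᶜ)).Reachable x y → x ≠ y →
        (G.induce ({v : V | bipIndepNum G + 1 ≤ G.degree v}ᶜ)).Adj x y := by
  set S := ({v : V | bipIndepNum G + 1 ≤ G.degree v}ᶜ) with hS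
  set H := G.induce S with hH
  suffices key : ∀ n : ℕ, ∀ x y : ↥S, ∀ p : H.Walk x y, p.length ≤ n → x ≠ y → H.Adj x y by
    intro x y hr hne
    obtain ⟨p⟩ := hr
    exact key p.length x y p le_rfl hne
  intro n
  induction n with
  | zero =>
    intro x y p hp hne
    cases p with
    | nil => exact absurd rfl hne
    | cons h q => simp at hp
  | succ n ih =>
    intro x y p hp hne
    cases p with
    | nil => exact absurd rfl hne
    | cons h q =>
      rename_i u
      cases q with
      | nil => exact h
      | cons h' r =>
        rename_i w
        -- h : H.Adj x u, h' : H.Adj u w, r : H.Walk w y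
        by_cases hxw : x = w
        · subst hxw
          exact ih x y r (by simp only [Walk.length_cons] at hp; omega) hne
        by_cases haxw : G.Adj (x : V) (w : V)
        · have hH : H.Adj x w := by
            simp only [hH, comap_adj, Function.Embedding.coe_subtype]
            exact haxw
          exact ih x y (Walk.cons hH r) (by simp only [Walk.length_cons] at hp ⊢; omega) hne
        · exfalso
          have hGxu : G.Adj (x : V) (u : V) := h
          have hGuw : G.Adj (u : V) (w : V) := h'
          have hxw' : (x : V) ≠ (w : V) := fun e => hxw (Subtype.ext e)
          have hreach : G.Reachable (x : V) (w : V) :=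
            ⟨Walk.cons hGxu (Walk.cons hGuw Walk.nil)⟩
          have hd2 : G.dist (x : V) (w : V) = 2 := by
            have hle : G.dist (x : V) (w : V) ≤ 2 := by
              simpa using SimpleGraph.dist_le (Walk.cons hGxu (Walk.cons hGuw Walk.nil))
            have h0 : G.dist (x : V) (w : V) ≠ 0 := (hreach.pos_dist_of_ne hxw').ne'
            have h1 : G.dist (x : V) (w : V) ≠ 1 := fun e =>
              haxw (SimpleGraph.dist_eq_one_iff_adj.mp e)
            omega
          have := hdeg x w haxw hd2
          have hx : ¬ (bipIndepNum G + 1 ≤ G.degree (x : V)) := x.2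
          have hw : ¬ (bipIndepNum G + 1 ≤ G.degree (w : V)) := w.2
          rcases max_cases (G.degree (x:V)) (G.degree (w:V)) with ⟨he, _⟩ | ⟨he, _⟩ <;> omega
end

section
/- Let G be a finite simple graph such that max{d_G(x), d_G(y)} ≥ α̃(G) + 1 for every pair of nonadjacent vertices x, y with d_G(x, y) = 2, where α̃(G) is the bipartite independence number of G. Let V* = {v ∈ V(G) : d_G(v) ≥ α̃(G) + 1}. If x and y are vertices lying in two distinct connected components of G − V*, then x and y have no common neighbor in G; in particular, N_G(x) ∩ N_G(y) ∩ V* = ∅. -/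
open SimpleGraph

/-- Under the Fan-type condition, vertices in distinct components of `G - V*` have no common
neighbor in `G`, where `V* = {v : d(v) ≥ α̃(G) + 1}`. -/
theorem stmt_15 {V : Type*} [Fintype V] (G : SimpleGraph V) [DecidableRel G.Adj]
    (hdeg : ∀ x y : V, ¬ G.Adj x y → G.dist x y = 2 →
      bipIndepNum G + 1 ≤ max (G.degree x) (G.degree y))
    (x y : V) (hx : x ∈ ({v : V | bipIndepNum G + 1 ≤ G.degree v}ᶜ : Set V))
    (hy : y ∈ ({v : V | bipIndepNum G + 1 ≤ G.degree v}ᶜ : Set V))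
    (hsep : ¬ (G.induce ({v : V | bipIndepNum G + 1 ≤ G.degree v}ᶜ : Set V)).Reachable
      ⟨x, hx⟩ ⟨y, hy⟩) :
    G.neighborSet x ∩ G.neighborSet y = ∅ := by
  by_contra h
  obtain ⟨z, hzx, hzy⟩ := Set.nonempty_iff_ne_empty.2 h
  replace hzx : G.Adj x z := hzx
  replace hzy : G.Adj y z := hzy
  have hne : x ≠ y := by
    rintro rfl
    exact hsep (Reachable.refl _)
  have hnadj : ¬ G.Adj x y := by
    intro hadj
    exact hsep ⟨Walk.cons (by exact hadj) Walk.nil⟩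
  have hreach : G.Reachable x y := ⟨Walk.cons hzx (Walk.cons hzy.symm Walk.nil)⟩
  have hle : G.dist x y ≤ 2 := by
    simpa using SimpleGraph.dist_le (Walk.cons hzx (Walk.cons hzy.symm Walk.nil))
  have hpos : 0 < G.dist x y := hreach.pos_dist_of_ne hne
  have hne1 : G.dist x y ≠ 1 := by
    intro h1
    obtain ⟨p, hp⟩ := hreach.exists_walk_length_eq_dist
    rw [h1] at hp
    exact hnadj (Walk.adj_of_length_eq_one hp)
  have hdist : G.dist x y = 2 := by omega
  have := hdeg x y hnadj hdist
  rcases le_max_iff.1 this with h' | h'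
  · exact hx h'
  · exact hy h'
end

section
/- Let G be a finite simple graph such that max{d_G(x), d_G(y)} ≥ α̃(G) + 1 for every pair of nonadjacent vertices x, y with d_G(x, y) = 2, where α̃(G) is the bipartite independence number of G. Let u and v be nonadjacent vertices of G with min{d_G(u), d_G(v)} ≥ α̃(G) + 1, and let G' = G + uv be the graph obtained from G by adding the edge uv. Then max{d_{G'}(x), d_{G'}(y)} ≥ α̃(G') + 1 for every pair of vertices x, y that are nonadjacent in G' with d_{G'}(x, y) = 2. -/
open SimpleGraph

lemma bipSet_mem {V : Type*} [Fintype V] (G : SimpleGraph V) :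
    (Fintype.card V + 1) ∈ {q : ℕ | ∃ s t : ℕ, 0 < s ∧ 0 < t ∧ s + t = q + 1 ∧
    ∀ A B : Finset V, Disjoint A B → A.card = s → B.card = t →
      ∃ a ∈ A, ∃ b ∈ B, G.Adj a b} := by
  refine ⟨1, Fintype.card V + 1, one_pos, Nat.succ_pos _, by ring, ?_⟩
  intro A B _ _ hB
  have := Finset.card_le_univ B
  rw [hB] at this
  omega

lemma bipIndepNum_anti {V : Type*} [Fintype V] {G H : SimpleGraph V} (h : G ≤ H) :
    bipIndepNum H ≤ bipIndepNum G := by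
  have hne : {q : ℕ | ∃ s t : ℕ, 0 < s ∧ 0 < t ∧ s + t = q + 1 ∧
      ∀ A B : Finset V, Disjoint A B → A.card = s → B.card = t →
        ∃ a ∈ A, ∃ b ∈ B, G.Adj a b}.Nonempty := ⟨_, bipSet_mem G⟩
  obtain ⟨s, t, hs, ht, hst, hall⟩ := Nat.sInf_mem hne
  exact Nat.sInf_le ⟨s, t, hs, ht, hst, fun A B hd hA hB => by
    obtain ⟨a, ha, b, hb, hab⟩ := hall A B hd hA hB
    exact ⟨a, ha, b, hb, h hab⟩⟩

lemma degree_mono' {V : Type*} [Fintype V] [DecidableEq V] {G H : SimpleGraph V}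
    [DecidableRel G.Adj] [DecidableRel H.Adj] (h : G ≤ H) (z : V) :
    G.degree z ≤ H.degree z := by
  apply Finset.card_le_card
  intro w hw
  rw [SimpleGraph.mem_neighborFinset] at *
  exact h hw

/-- Adding an edge between two nonadjacent vertices of degree at least `α̃(G) + 1` preserves
the Fan-type condition. -/
theorem stmt_16 {V : Type*} [Fintype V] [DecidableEq V] (G : SimpleGraph V) [DecidableRel G.Adj]
    (hdeg : ∀ x y : V, ¬ G.Adj x y → G.dist x y = 2 →
      bipIndepNum G + 1 ≤ max (G.degree x) (G.degree y))
    (u v : V) (hne : u ≠ v) (huv : ¬ G.Adj u v)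
    (hu : bipIndepNum G + 1 ≤ G.degree u) (hv : bipIndepNum G + 1 ≤ G.degree v) :
    ∀ x y : V, ¬ (G ⊔ edge u v).Adj x y → (G ⊔ edge u v).dist x y = 2 →
      bipIndepNum (G ⊔ edge u v) + 1 ≤
        max ((G ⊔ edge u v).degree x) ((G ⊔ edge u v).degree y) := by
  intro x y hxy hdist
  set G' := G ⊔ edge u v with hG'
  have hle : G ≤ G' := le_sup_left
  have hbip : bipIndepNum G' ≤ bipIndepNum G := bipIndepNum_anti hle
  have hfromG : ∀ z : V, bipIndepNum G + 1 ≤ G.degree z →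
      bipIndepNum G' + 1 ≤ G'.degree z := fun z hz =>
    le_trans (Nat.add_le_add_right hbip 1) (le_trans hz (degree_mono' hle z))
  obtain ⟨p, hp⟩ := exists_walk_of_dist_ne_zero (G := G') (u := x) (v := y) (by omega)
  rw [hdist] at hp
  cases p with
  | nil => simp at hp
  | cons h1 q =>
    cases q with
    | nil => simp at hp
    | @cons w _ _ h2 q2 =>
      cases q2 with
      | cons h3 q3 => simp [SimpleGraph.Walk.length_cons] at hp
      | nil =>
        -- h1 : G'.Adj x w, h2 : G'.Adj w y
        rcases (sup_adj _ _ _ _).mp h1 with hxw | hxw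
        · rcases (sup_adj _ _ _ _).mp h2 with hwy | hwy
          · -- both edges in G
            have hnadjG : ¬ G.Adj x y := fun hc => hxy (hle hc)
            have hxyne : x ≠ y := by
              rintro rfl
              rw [SimpleGraph.dist_self] at hdist; omega
            have hd2 : G.dist x y = 2 := by
              have hub : G.dist x y ≤ 2 := by
                have := SimpleGraph.dist_le
                  (SimpleGraph.Walk.cons hxw (SimpleGraph.Walk.cons hwy SimpleGraph.Walk.nil))
                simpa using this
              have hne0 : G.dist x y ≠ 0 :=
                SimpleGraph.dist_ne_zero_iff_ne_and_reachable.mpr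
                  ⟨hxyne, ⟨SimpleGraph.Walk.cons hxw (SimpleGraph.Walk.cons hwy SimpleGraph.Walk.nil)⟩⟩
              have hne1 : G.dist x y ≠ 1 := fun hc =>
                hnadjG ((SimpleGraph.dist_eq_one_iff_adj).mp hc)
              omega
            have := hdeg x y hnadjG hd2
            rcases max_le_iff.mp (le_refl (max (G.degree x) (G.degree y))) with ⟨_, _⟩
            rcases le_max_iff.mp this with hh | hh
            · exact le_trans (hfromG x hh) (le_max_left _ _)
            · exact le_trans (hfromG y hh) (le_max_right _ _)
          · -- edge wy is the new edge, so y = u or y = v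
            rw [edge_adj] at hwy
            rcases hwy.1 with ⟨_, rfl⟩ | ⟨_, rfl⟩
            · exact le_trans (hfromG _ hv) (le_max_right _ _)
            · exact le_trans (hfromG _ hu) (le_max_right _ _)
        · -- edge xw is the new edge, so x = u or x = v
          rw [edge_adj] at hxw
          rcases hxw.1 with ⟨rfl, _⟩ | ⟨rfl, _⟩
          · exact le_trans (hfromG _ hu) (le_max_left _ _)
          · exact le_trans (hfromG _ hv) (le_max_left _ _)
end
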